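/- arXiv:1711.03848 — 6 statements merged into one kernel-verified Lean document; each statement's English description precedes it below -/
import Mathlib

section
/- Let n ≥ 1 and 0 ≤ k ≤ n be integers. Then Σ_{j=k, j even}^{n} C(n,j) = (1/2)·[ Σ_{j=0}^{n−k} C(n,j) + (−1)^k · C(n−1, k−1) ] and Σ_{j=k, j odd}^{n} C(n,j) = (1/2)·[ Σ_{j=0}^{n−k} C(n,j) − (−1)^k · C(n−1, k−1) ], where by convention C(n−1, k−1) = 0 when k = 0. -/
lemma alt_partial (n : ℕ) (hn : 1 ≤ n) :
    ∀ m, ∑ j ∈ Finset.range (m + 1), (-1 : ℝ) ^ j * (n.choose j : ℝ)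
      = (-1 : ℝ) ^ m * ((n - 1).choose m : ℝ) := by
  obtain ⟨p, rfl⟩ : ∃ p, n = p + 1 := ⟨n - 1, by omega⟩
  intro m
  induction m with
  | zero => simp
  | succ m ih =>
      rw [Finset.sum_range_succ, ih, Nat.choose_succ_succ]
      simp only [Nat.add_sub_cancel]
      push_cast
      ring

lemma sum_tail (n k : ℕ) (hk : k ≤ n) :
    ∑ j ∈ Finset.Icc k n, (n.choose j : ℝ)
      = ∑ j ∈ Finset.range (n - k + 1), (n.choose j : ℝ) := by
  rw [← Finset.Ico_add_one_right_eq_Icc, Finset.sum_Ico_eq_sum_range]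
  have h1 : n + 1 - k = n - k + 1 := by omega
  rw [h1, ← Finset.sum_range_reflect (fun i => (n.choose i : ℝ)) (n - k + 1)]
  apply Finset.sum_congr rfl
  intro i hi
  simp only [Finset.mem_range] at hi
  have : n - k + 1 - 1 - i = n - (k + i) := by omega
  rw [this, Nat.choose_symm (by omega)]

/-- For integers `1 ≤ n` and `0 ≤ k ≤ n`:
`Σ_{j=k, j even}^{n} C(n,j) = (1/2)·[ Σ_{j=0}^{n−k} C(n,j) + (−1)^k · C(n−1, k−1) ]` and
`Σ_{j=k, j odd}^{n} C(n,j) = (1/2)·[ Σ_{j=0}^{n−k} C(n,j) − (−1)^k · C(n−1, k−1) ]`,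
with the convention `C(n−1, k−1) = 0` when `k = 0`. -/
theorem sum_choose_parity (n k : ℕ) (hn : 1 ≤ n) (hk : k ≤ n) :
    (∑ j ∈ (Finset.Icc k n).filter (fun j => Even j), (n.choose j : ℝ)) =
      (1 / 2) * ((∑ j ∈ Finset.range (n - k + 1), (n.choose j : ℝ)) +
        (-1 : ℝ) ^ k * (if k = 0 then 0 else ((n - 1).choose (k - 1) : ℝ))) ∧
    (∑ j ∈ (Finset.Icc k n).filter (fun j => Odd j), (n.choose j : ℝ)) =
      (1 / 2) * ((∑ j ∈ Finset.range (n - k + 1), (n.choose j : ℝ)) -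
        (-1 : ℝ) ^ k * (if k = 0 then 0 else ((n - 1).choose (k - 1) : ℝ))) := by
  set A := ∑ j ∈ (Finset.Icc k n).filter (fun j => Even j), (n.choose j : ℝ) with hA
  set B := ∑ j ∈ (Finset.Icc k n).filter (fun j => Odd j), (n.choose j : ℝ) with hB
  set T := ∑ j ∈ Finset.range (n - k + 1), (n.choose j : ℝ) with hT
  set P := (-1 : ℝ) ^ k * (if k = 0 then 0 else ((n - 1).choose (k - 1) : ℝ)) with hP
  have hBnot : B = ∑ j ∈ (Finset.Icc k n).filter (fun j => ¬ Even j), (n.choose j : ℝ) := by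
    rw [hB]
    apply Finset.sum_congr _ (fun _ _ => rfl)
    apply Finset.filter_congr
    intro j _
    exact (Nat.not_even_iff_odd).symm
  have hsum : A + B = T := by
    rw [hBnot, hA, Finset.sum_filter_add_sum_filter_not]
    exact sum_tail n k hk
  have halt : ∑ j ∈ Finset.Icc k n, (-1 : ℝ) ^ j * (n.choose j : ℝ) = P := by
    have hsplit : ∑ j ∈ Finset.range k, (-1 : ℝ) ^ j * (n.choose j : ℝ)
        + ∑ j ∈ Finset.Icc k n, (-1 : ℝ) ^ j * (n.choose j : ℝ)
        = ∑ j ∈ Finset.range (n + 1), (-1 : ℝ) ^ j * (n.choose j : ℝ) := by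
      rw [Finset.range_eq_Ico, Finset.range_eq_Ico, ← Finset.Ico_add_one_right_eq_Icc]
      exact Finset.sum_Ico_consecutive (fun j => (-1 : ℝ) ^ j * (n.choose j : ℝ)) (Nat.zero_le k) (by omega)
    have hfull : ∑ j ∈ Finset.range (n + 1), (-1 : ℝ) ^ j * (n.choose j : ℝ) = 0 := by
      rw [alt_partial n hn n, Nat.choose_eq_zero_of_lt (by omega)]
      simp
    have hinit : ∑ j ∈ Finset.range k, (-1 : ℝ) ^ j * (n.choose j : ℝ) = -P := by
      rcases Nat.eq_zero_or_pos k with hk0 | hk1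
      · subst hk0; simp [hP]
      · obtain ⟨m, rfl⟩ : ∃ m, k = m + 1 := ⟨k - 1, by omega⟩
        rw [hP, if_neg (by omega), alt_partial n hn m]
        simp only [Nat.add_sub_cancel, pow_succ]
        ring
    linarith
  have hdiff : A - B = P := by
    rw [← halt,
      ← Finset.sum_filter_add_sum_filter_not (Finset.Icc k n) (fun j => Even j)]
    have h1 : ∑ j ∈ (Finset.Icc k n).filter (fun j => Even j),
        (-1 : ℝ) ^ j * (n.choose j : ℝ) = A := by
      rw [hA]
      apply Finset.sum_congr rfl
      intro j hj
      simp only [Finset.mem_filter] at hj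
      rw [Even.neg_one_pow hj.2, one_mul]
    have h2 : ∑ j ∈ (Finset.Icc k n).filter (fun j => ¬ Even j),
        (-1 : ℝ) ^ j * (n.choose j : ℝ) = -B := by
      have hfe : (Finset.Icc k n).filter (fun j => ¬ Even j)
          = (Finset.Icc k n).filter (fun j => Odd j) := by
        apply Finset.filter_congr
        intro j _
        exact Nat.not_even_iff_odd
      rw [hBnot, ← Finset.sum_neg_distrib, hfe]
      apply Finset.sum_congr rfl
      intro j hj
      simp only [Finset.mem_filter] at hj
      rw [Odd.neg_one_pow hj.2]
      ring
    rw [h1, h2]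
    ring
  constructor <;> linarith
end

section
/- Let d ≥ 2 and let β_0, …, β_{d−1} be independent real-valued random variables with P(β_k > 0) = P(β_k < 0) = 1/2 for every k. Then for every 0 ≤ m ≤ d−1, the probability p_m that the polynomial P(y) = Σ_{k=0}^{d−1} β_k·C(d−1,k)·y^k has exactly m roots in (0, ∞) counted with multiplicity satisfies p_m ≤ (1/2^d)·[ Σ_{j=0}^{d−1−m} C(d−1, j) + C(d−2, m−1) ], where by convention C(d−2, −1) = 0. -/
namespace Descartes

/-- the nonzero test, fixed once and for all -/
noncomputable def nz : ℝ → Bool := fun x => decide (x ≠ 0)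

lemma nz_true {x : ℝ} (h : x ≠ 0) : nz x = true := by simp [nz, h]
lemma nz_false : nz (0:ℝ) = false := by simp [nz]
lemma ne_zero_of_nz {x : ℝ} (h : nz x = true) : x ≠ 0 := by simpa [nz] using h

noncomputable def varAux : List ℝ → ℕ
  | [] => 0
  | [_] => 0
  | a :: b :: l => (if a * b < 0 then 1 else 0) + varAux (b :: l)

lemma varAux_nil : varAux [] = 0 := by simp [varAux]
lemma varAux_single (a : ℝ) : varAux [a] = 0 := by simp [varAux]
lemma varAux_cons_cons (a b : ℝ) (l : List ℝ) :
    varAux (a :: b :: l) = (if a * b < 0 then 1 else 0) + varAux (b :: l) := by simp [varAux]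

noncomputable def svar (l : List ℝ) : ℕ := varAux (l.filter nz)

/-- first nonzero entry (0 if none) -/
noncomputable def fnz (l : List ℝ) : ℝ := (l.filter nz).headI

lemma filter_nonzero_mem {l : List ℝ} {x : ℝ} (hx : x ∈ l.filter nz) : x ≠ 0 :=
  ne_zero_of_nz (List.of_mem_filter hx)

lemma fnz_ne_zero_iff {l : List ℝ} : fnz l ≠ 0 ↔ ∃ x ∈ l, x ≠ 0 := by
  unfold fnz
  rcases h : l.filter nz with _ | ⟨a, t⟩
  · constructor
    · intro hc; exact absurd rfl hc
    · rintro ⟨x, hx, hx0⟩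
      have : x ∈ l.filter nz := List.mem_filter.2 ⟨hx, nz_true hx0⟩
      rw [h] at this; simp at this
  · have ha : a ∈ l.filter nz := by rw [h]; exact List.mem_cons_self
    constructor
    · intro _; exact ⟨a, (List.mem_filter.1 ha).1, filter_nonzero_mem ha⟩
    · intro _; exact filter_nonzero_mem ha

lemma all_zero_of_fnz_zero {l : List ℝ} (h : ¬ fnz l ≠ 0) : ∀ x ∈ l, x = 0 := by
  intro x hx
  by_contra hx0
  exact h (fnz_ne_zero_iff.2 ⟨x, hx, hx0⟩)

lemma fnz_cons_ne {a : ℝ} (ha : a ≠ 0) (l : List ℝ) : fnz (a :: l) = a := by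
  unfold fnz
  rw [List.filter_cons_of_pos (nz_true ha)]
  rfl

lemma fnz_cons_zero (l : List ℝ) : fnz ((0:ℝ) :: l) = fnz l := by
  unfold fnz
  rw [List.filter_cons_of_neg (by simp [nz_false])]

lemma svar_cons_zero (l : List ℝ) : svar ((0:ℝ) :: l) = svar l := by
  unfold svar
  rw [List.filter_cons_of_neg (by simp [nz_false])]

lemma svar_all_zero {l : List ℝ} (h : ∀ x ∈ l, x = 0) : svar l = 0 := by
  unfold svar
  have : l.filter nz = [] := by
    rw [List.filter_eq_nil_iff]
    intro x hx
    rw [h x hx]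
    simp [nz_false]
  rw [this, varAux_nil]

lemma svar_cons_ne {a : ℝ} (ha : a ≠ 0) (l : List ℝ) :
    svar (a :: l) = (if a * fnz l < 0 then 1 else 0) + svar l := by
  unfold svar fnz
  rw [List.filter_cons_of_pos (nz_true ha)]
  rcases h : l.filter nz with _ | ⟨b, t⟩
  · rw [varAux_single, varAux_nil]
    have hhead : ([] : List ℝ).headI = 0 := rfl
    rw [hhead, mul_zero]
    simp
  · rw [varAux_cons_cons]
    rfl

lemma sign_transfer {a b f : ℝ} (hab : 0 < a * b) (h : a * f < 0) : b * f < 0 := by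
  nlinarith [mul_neg_of_pos_of_neg hab h, sq_nonneg a, sq_nonneg b]

lemma svar_cons_head_replace {a b : ℝ} (hab : 0 < a * b) (l : List ℝ) :
    svar (a :: l) = svar (b :: l) := by
  have ha : a ≠ 0 := fun h => by simp [h] at hab
  have hb : b ≠ 0 := fun h => by simp [h] at hab
  rw [svar_cons_ne ha, svar_cons_ne hb]
  congr 1
  have : a * fnz l < 0 ↔ b * fnz l < 0 :=
    ⟨sign_transfer hab, sign_transfer (by nlinarith : (0:ℝ) < b * a)⟩
  simp [this]

lemma svar_le_cons (a : ℝ) (l : List ℝ) : svar l ≤ svar (a :: l) := by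
  by_cases ha : a = 0
  · subst ha; rw [svar_cons_zero]
  · rw [svar_cons_ne ha]; omega

section Sublist

lemma sign_triangle (a b c : ℝ) (hb : b ≠ 0) :
    (if a * c < 0 then (1:ℕ) else 0) ≤
      (if a * b < 0 then 1 else 0) + (if b * c < 0 then 1 else 0) := by
  by_cases h : a * c < 0
  · simp only [h, if_true]
    by_contra hc
    push_neg at hc
    have h1 : ¬ a * b < 0 := by by_contra h1; simp [h1] at hc
    have h2 : ¬ b * c < 0 := by by_contra h2; simp [h1, h2] at hc
    push_neg at h1 h2
    have hb2 : 0 < b * b := mul_self_pos.mpr hb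
    nlinarith [mul_nonneg h1 h2]
  · simp [h]

lemma varAux_sublist : ∀ {l' l : List ℝ}, List.Sublist l' l → (∀ x ∈ l, x ≠ 0) →
    varAux l' ≤ varAux l ∧ ∀ a : ℝ, varAux (a :: l') ≤ varAux (a :: l) := by
  intro l' l h
  induction h with
  | slnil => exact fun _ => ⟨le_refl _, fun a => le_refl _⟩
  | @cons l₁ l₂ b hsub ih =>
    intro hnz
    have hnz' : ∀ x ∈ l₂, x ≠ 0 := fun x hx => hnz x (List.mem_cons_of_mem _ hx)
    obtain ⟨ih1, ih2⟩ := ih hnz'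
    constructor
    · refine le_trans ih1 ?_
      cases l₂ with
      | nil => simp [varAux_nil, varAux_single]
      | cons c t => rw [varAux_cons_cons]; omega
    · intro a
      refine le_trans (ih2 a) ?_
      cases l₂ with
      | nil => simp [varAux_single, varAux_cons_cons, varAux_nil]
      | cons c t =>
        rw [varAux_cons_cons, varAux_cons_cons, varAux_cons_cons]
        have := sign_triangle a b c (hnz b (List.mem_cons_self))
        omega
  | @cons_cons l₁ l₂ b hsub ih =>
    intro hnz
    have hnz' : ∀ x ∈ l₂, x ≠ 0 := fun x hx => hnz x (List.mem_cons_of_mem _ hx)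
    obtain ⟨ih1, ih2⟩ := ih hnz'
    refine ⟨ih2 b, fun a => ?_⟩
    cases l₁ with
    | nil =>
      cases l₂ with
      | nil => exact le_refl _
      | cons c t =>
        rw [varAux_cons_cons, varAux_cons_cons]
        exact add_le_add (le_refl _) (ih2 b)
    | cons c t =>
      rw [varAux_cons_cons, varAux_cons_cons]
      exact add_le_add (le_refl _) (ih2 b)

lemma svar_sublist {l' l : List ℝ} (h : List.Sublist l' l) : svar l' ≤ svar l := by
  have hf : List.Sublist (l'.filter nz) (l.filter nz) := h.filter _
  exact (varAux_sublist hf (fun x hx => filter_nonzero_mem hx)).1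

end Sublist

/-- the coefficient list (ascending) of `(X - r) * Q` from that of `Q`. -/
noncomputable def cnvl (r : ℝ) : List ℝ → List ℝ
  | [] => [0]
  | a :: t => (-(r * a)) :: (cnvl r t).modifyHead (fun x => a + x)

lemma cnvl_nil (r : ℝ) : cnvl r [] = [0] := rfl
lemma cnvl_cons (r a : ℝ) (t : List ℝ) :
    cnvl r (a :: t) = (-(r * a)) :: (cnvl r t).modifyHead (fun x => a + x) := rfl

lemma cnvl_ne_nil (r : ℝ) (l : List ℝ) : cnvl r l ≠ [] := by
  cases l <;> simp [cnvl]

lemma cnvl_all_zero (r : ℝ) : ∀ (l : List ℝ), (∀ x ∈ l, x = 0) → ∀ x ∈ cnvl r l, x = 0 := by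
  intro l
  induction l with
  | nil => intro _ x hx; simp [cnvl] at hx; exact hx
  | cons a t ih =>
    intro h x hx
    have ha : a = 0 := h a (List.mem_cons_self)
    have ht := ih (fun y hy => h y (List.mem_cons_of_mem _ hy))
    subst ha
    rw [cnvl_cons] at hx
    simp only [mul_zero, neg_zero] at hx
    rcases List.mem_cons.1 hx with h1 | h2
    · exact h1
    · have heq : (cnvl r t).modifyHead (fun x => 0 + x) = cnvl r t := by
        rcases hc : cnvl r t with _ | ⟨c, u⟩ <;> simp [List.modifyHead]
      rw [heq] at h2
      exact ht x h2

/-- Key lemma: multiplying by a positive-root factor raises sign variation. -/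
lemma cnvl_main (r : ℝ) (hr : 0 < r) :
    ∀ (l : List ℝ), fnz l ≠ 0 →
      svar l + 1 ≤ svar (cnvl r l) ∧ fnz (cnvl r l) * fnz l < 0 := by
  intro l
  induction l with
  | nil => intro h; exact absurd (show fnz ([]:List ℝ) = 0 from rfl) h
  | cons a t ih =>
    intro h
    by_cases hft : fnz t ≠ 0
    · obtain ⟨x, hxt, hx0⟩ := fnz_ne_zero_iff.1 hft
      rcases t with _ | ⟨b, u⟩
      · simp at hxt
      obtain ⟨ihs, ihf⟩ := ih hft
      by_cases ha : a = 0
      · subst ha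
        have hcnvl : cnvl r (0 :: b :: u) = 0 :: cnvl r (b :: u) := by
          rw [cnvl_cons]
          simp only [mul_zero, neg_zero]
          congr 1
          rcases hc : cnvl r (b :: u) with _ | ⟨c, v⟩
          · exact absurd hc (cnvl_ne_nil _ _)
          · simp [List.modifyHead]
        rw [hcnvl, svar_cons_zero, svar_cons_zero, fnz_cons_zero, fnz_cons_zero]
        exact ⟨ihs, ihf⟩
      · -- a ≠ 0
        have hcnvlt : cnvl r (b :: u) = (-(r*b)) :: ((cnvl r u).modifyHead (fun x => b + x)) :=
          cnvl_cons r b u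
        set ct := (cnvl r u).modifyHead (fun x => b + x) with hct
        set x' := a + -(r*b) with hx'
        have hcnvl : cnvl r (a :: b :: u) = (-(r*a)) :: x' :: ct := by
          rw [cnvl_cons, hcnvlt]
          rfl
        have hra : -(r*a) ≠ 0 := by
          simp only [ne_eq, neg_eq_zero, mul_eq_zero, not_or]
          exact ⟨ne_of_gt hr, ha⟩
        have hfcnvl : fnz (cnvl r (a :: b :: u)) = -(r*a) := by
          rw [hcnvl]; exact fnz_cons_ne hra _
        have hfq : fnz (a :: b :: u) = a := fnz_cons_ne ha _
        refine ⟨?_, by rw [hfcnvl, hfq]; nlinarith [mul_self_pos.mpr ha]⟩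
        by_cases hb : b = 0
        · -- b = 0, so x' = a
          subst hb
          have hx'a : x' = a := by rw [hx']; simp
          have hsvct : svar (cnvl r (0 :: u)) = svar ct := by
            rw [hcnvlt]; simp only [mul_zero, neg_zero]; exact svar_cons_zero ct
          have h1 : svar (cnvl r (a :: 0 :: u)) = 1 + svar (a :: ct) := by
            rw [hcnvl, hx'a, svar_cons_ne hra, fnz_cons_ne ha]
            have : -(r*a) * a < 0 := by nlinarith [mul_self_pos.mpr ha]
            rw [if_pos this]
          have h2 : svar ct ≤ svar (a :: ct) := svar_le_cons _ _
          have h3 : svar (a :: (0:ℝ) :: u) ≤ 1 + svar ((0:ℝ) :: u) := by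
            rw [svar_cons_ne ha]
            split <;> omega
          omega
        · -- b ≠ 0
          have hfb : fnz (b :: u) = b := fnz_cons_ne hb _
          have hsq : svar (a :: b :: u) = (if a * b < 0 then 1 else 0) + svar (b :: u) := by
            rw [svar_cons_ne ha, hfb]
          rcases lt_trichotomy (a * b) 0 with hab | hab | hab
          · -- opposite signs
            have hx'0 : 0 < x' * a := by rw [hx']; nlinarith [mul_self_pos.mpr ha]
            have hx'ne : x' ≠ 0 := fun hc => by rw [hc] at hx'0; simp at hx'0
            have hstep : svar (cnvl r (a :: b :: u)) = 1 + svar (x' :: ct) := by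
              rw [hcnvl, svar_cons_ne hra, fnz_cons_ne hx'ne]
              have : -(r*a) * x' < 0 := by nlinarith
              rw [if_pos this]
            have hxb : x' * b < 0 := by
              have h1 : (x' * a) * (a * b) < 0 := mul_neg_of_pos_of_neg hx'0 hab
              by_contra h2
              push_neg at h2
              nlinarith [mul_nonneg h2 (sq_nonneg a)]
            have hrep : svar (x' :: ct) = svar ((-(r*b)) :: ct) := by
              apply svar_cons_head_replace
              nlinarith [mul_pos hr (neg_pos.2 hxb)]
            rw [hstep, hrep, ← hcnvlt]
            rw [hsq, if_pos hab]
            omega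
          · exact absurd (mul_eq_zero.1 hab) (by simp [ha, hb])
          · -- same signs
            have hsub : svar ((-(r*a)) :: ct) ≤ svar (cnvl r (a :: b :: u)) := by
              rw [hcnvl]
              exact svar_sublist (List.Sublist.cons₂ _ (List.sublist_cons_self _ _))
            have hrep : svar ((-(r*a)) :: ct) = svar ((-(r*b)) :: ct) := by
              apply svar_cons_head_replace
              nlinarith [mul_pos (mul_pos hr hr) hab]
            rw [hsq, if_neg (by linarith)]
            rw [hrep, ← hcnvlt] at hsub
            omega
    · -- t is all zero
      have htz : ∀ x ∈ t, x = 0 := all_zero_of_fnz_zero hft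
      have ha : a ≠ 0 := by
        intro hc
        subst hc
        rw [fnz_cons_zero] at h
        exact hft h
      have hctz : ∀ x ∈ cnvl r t, x = 0 := cnvl_all_zero r t htz
      rcases hc : cnvl r t with _ | ⟨c0, rest⟩
      · exact absurd hc (cnvl_ne_nil _ _)
      have hc0 : c0 = 0 := hctz c0 (by rw [hc]; exact List.mem_cons_self)
      have hrest : ∀ x ∈ rest, x = 0 := fun x hx => hctz x (by rw [hc]; exact List.mem_cons_of_mem _ hx)
      have hcnvl : cnvl r (a :: t) = (-(r*a)) :: a :: rest := by
        rw [cnvl_cons, hc, hc0]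
        simp [List.modifyHead]
      have hra : -(r*a) ≠ 0 := by
        simp only [ne_eq, neg_eq_zero, mul_eq_zero, not_or]
        exact ⟨ne_of_gt hr, ha⟩
      have hfa : fnz (a :: t) = a := fnz_cons_ne ha _
      constructor
      · have h1 : svar (a :: t) = 0 := by
          rw [svar_cons_ne ha, svar_all_zero htz]
          have : fnz t = 0 := by push_neg at hft; exact hft
          rw [this, mul_zero]
          simp
        have h2 : svar (cnvl r (a :: t)) = 1 := by
          rw [hcnvl, svar_cons_ne hra, fnz_cons_ne ha, svar_cons_ne ha]
          have hfr : fnz rest = 0 := by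
            by_contra hfr
            obtain ⟨x, hx, hx0⟩ := fnz_ne_zero_iff.1 hfr
            exact hx0 (hrest x hx)
          rw [hfr, mul_zero, svar_all_zero hrest]
          have : -(r*a) * a < 0 := by nlinarith [mul_self_pos.mpr ha]
          rw [if_pos this]
          simp
        omega
      · have : fnz (cnvl r (a :: t)) = -(r*a) := by rw [hcnvl]; exact fnz_cons_ne hra _
        rw [this, hfa]
        nlinarith [mul_self_pos.mpr ha]

end Descartes

open Polynomial

namespace Descartes

/-! ### From lists to polynomials -/

noncomputable def ofList : List ℝ → ℝ[X]
  | [] => 0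
  | a :: t => C a + X * ofList t

lemma ofList_nil : ofList [] = 0 := rfl
lemma ofList_cons (a : ℝ) (t : List ℝ) : ofList (a :: t) = C a + X * ofList t := rfl

lemma coeff_ofList : ∀ (l : List ℝ) (k : ℕ), (ofList l).coeff k = l.getD k 0 := by
  intro l
  induction l with
  | nil => intro k; simp [ofList_nil]
  | cons a t ih =>
    intro k
    rw [ofList_cons]
    cases k with
    | zero => simp
    | succ k =>
      rw [coeff_add, coeff_C, if_neg (Nat.succ_ne_zero k), coeff_X_mul, ih]
      simp

lemma ofList_modifyHead_add (a : ℝ) : ∀ (m : List ℝ), m ≠ [] →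
    ofList (m.modifyHead (fun x => a + x)) = C a + ofList m := by
  rintro (_ | ⟨c, u⟩) hm
  · exact absurd rfl hm
  · simp only [List.modifyHead, ofList_cons]
    rw [C_add]
    ring

lemma ofList_cnvl (r : ℝ) : ∀ (l : List ℝ), ofList (cnvl r l) = (X - C r) * ofList l := by
  intro l
  induction l with
  | nil => rw [cnvl_nil, ofList_nil]; simp [ofList_cons, ofList_nil]
  | cons a t ih =>
    rw [cnvl_cons, ofList_cons, ofList_modifyHead_add _ _ (cnvl_ne_nil r t), ih, ofList_cons]
    have : C (-(r * a)) = - (C r * C a) := by simp [C_mul]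
    rw [this]
    ring

lemma natDegree_ofList_le (l : List ℝ) : (ofList l).natDegree ≤ l.length - 1 := by
  apply Polynomial.natDegree_le_iff_coeff_eq_zero.2
  intro N hN
  rw [coeff_ofList]
  apply List.getD_eq_default
  omega

lemma coeff_ofList_getLast (l : List ℝ) (h : l ≠ []) :
    (ofList l).coeff (l.length - 1) = l.getLast h := by
  rw [coeff_ofList, List.getLast_eq_getElem]
  exact List.getD_eq_getElem l 0 (by have := List.length_pos_iff.2 h; omega)

lemma natDegree_ofList (l : List ℝ) (h : l ≠ []) (h0 : l.getLast h ≠ 0) :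
    (ofList l).natDegree = l.length - 1 := by
  refine le_antisymm (natDegree_ofList_le l) ?_
  apply Polynomial.le_natDegree_of_ne_zero
  rw [coeff_ofList_getLast l h]
  exact h0

lemma ofList_ne_zero (l : List ℝ) (h : l ≠ []) (h0 : l.getLast h ≠ 0) : ofList l ≠ 0 := by
  intro hc
  apply h0
  rw [← coeff_ofList_getLast l h, hc, coeff_zero]

/-! ### coefficient list of a polynomial -/

noncomputable def clist (P : ℝ[X]) : List ℝ := (List.range (P.natDegree + 1)).map P.coeff

lemma clist_length (P : ℝ[X]) : (clist P).length = P.natDegree + 1 := by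
  simp [clist]

lemma clist_ne_nil (P : ℝ[X]) : clist P ≠ [] := by
  intro h
  have := clist_length P
  rw [h] at this
  simp at this

lemma clist_getD (P : ℝ[X]) (k : ℕ) : (clist P).getD k 0 = P.coeff k := by
  by_cases hk : k < P.natDegree + 1
  · rw [List.getD_eq_getElem _ _ (by simpa [clist_length] using hk)]
    unfold clist
    rw [List.getElem_map, List.getElem_range]
  · rw [List.getD_eq_default _ _ (by simpa [clist_length] using hk)]
    rw [coeff_eq_zero_of_natDegree_lt (by omega)]

lemma ofList_clist (P : ℝ[X]) : ofList (clist P) = P := by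
  ext k
  rw [coeff_ofList, clist_getD]

lemma clist_getLast (P : ℝ[X]) : (clist P).getLast (clist_ne_nil P) = P.leadingCoeff := by
  rw [List.getLast_eq_getElem, ← List.getD_eq_getElem (clist P) 0, clist_length,
    Nat.add_sub_cancel, clist_getD]
  rfl

lemma clist_eq_of_getLast_ne (l : List ℝ) (h : l ≠ []) (h0 : l.getLast h ≠ 0) :
    clist (ofList l) = l := by
  have hdeg := natDegree_ofList l h h0
  have hlen : (clist (ofList l)).length = l.length := by
    rw [clist_length, hdeg]
    have := List.length_pos_iff.2 h
    omega
  apply List.ext_getElem hlen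
  intro i h1 h2
  have : (clist (ofList l))[i] = (clist (ofList l)).getD i 0 :=
    (List.getD_eq_getElem _ _ h1).symm
  rw [this, clist_getD, coeff_ofList, List.getD_eq_getElem _ _ h2]

/-! ### sign variation of a polynomial -/

noncomputable def pvar (P : ℝ[X]) : ℕ := svar (clist P)

lemma length_cnvl (r : ℝ) : ∀ l : List ℝ, (cnvl r l).length = l.length + 1 := by
  intro l
  induction l with
  | nil => rfl
  | cons a t ih =>
    rw [cnvl_cons]
    simp only [List.length_cons, List.length_modifyHead, ih]

lemma cnvl_getD_last (r : ℝ) : ∀ (l : List ℝ), l ≠ [] →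
    (cnvl r l).getD l.length 0 = l.getD (l.length - 1) 0 := by
  intro l
  induction l with
  | nil => intro h; exact absurd rfl h
  | cons a t ih =>
    intro _
    cases t with
    | nil => rw [cnvl_cons, cnvl_nil]; simp [List.modifyHead]
    | cons b u =>
      rcases hc : cnvl r (b :: u) with _ | ⟨c, v⟩
      · exact absurd hc (cnvl_ne_nil _ _)
      have hlenv : v.length = u.length + 1 := by
        have := length_cnvl r (b :: u)
        rw [hc] at this
        simpa using this
      have step : cnvl r (a :: b :: u) = (-(r*a)) :: (a + c) :: v := by
        rw [cnvl_cons, hc]; rfl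
      have ihs := ih (by simp)
      rw [hc] at ihs
      simp only [List.length_cons, List.getD_cons_succ, Nat.add_sub_cancel] at ihs ⊢
      rw [step]
      simp only [List.getD_cons_succ]
      simpa using ihs

lemma cnvl_getLast (r : ℝ) (l : List ℝ) (h : l ≠ []) :
    (cnvl r l).getLast (cnvl_ne_nil r l) = l.getLast h := by
  rw [List.getLast_eq_getElem, List.getLast_eq_getElem,
    ← List.getD_eq_getElem (cnvl r l) 0, ← List.getD_eq_getElem l 0, length_cnvl,
    Nat.add_sub_cancel]
  exact cnvl_getD_last r l h

lemma pvar_mul_X_sub_C {r : ℝ} (hr : 0 < r) {Q : ℝ[X]} (hQ : Q ≠ 0) :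
    pvar Q + 1 ≤ pvar ((X - C r) * Q) := by
  set l := clist Q with hl
  have hlne : l ≠ [] := clist_ne_nil Q
  have hlast : l.getLast hlne = Q.leadingCoeff := clist_getLast Q
  have hlast0 : l.getLast hlne ≠ 0 := by rw [hlast]; exact leadingCoeff_ne_zero.2 hQ
  have hfnz : fnz l ≠ 0 :=
    fnz_ne_zero_iff.2 ⟨l.getLast hlne, List.getLast_mem hlne, hlast0⟩
  obtain ⟨hs, _⟩ := cnvl_main r hr l hfnz
  have hprod : (X - C r) * Q = ofList (cnvl r l) := by
    rw [ofList_cnvl, hl, ofList_clist]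
  have hclast : (cnvl r l).getLast (cnvl_ne_nil r l) ≠ 0 := by
    rw [cnvl_getLast r l hlne]; exact hlast0
  have hcl : clist ((X - C r) * Q) = cnvl r l := by
    rw [hprod]
    exact clist_eq_of_getLast_ne _ (cnvl_ne_nil r l) hclast
  unfold pvar
  rw [hcl, ← hl]
  exact hs

lemma pvar_multiset_prod (s : Multiset ℝ) (hs : ∀ r ∈ s, 0 < r) {Q : ℝ[X]} (hQ : Q ≠ 0) :
    pvar Q + Multiset.card s ≤ pvar ((s.map (fun r => X - C r)).prod * Q) := by
  induction s using Multiset.induction_on with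
  | empty => simp
  | cons a s ih =>
    have ha : 0 < a := hs a (Multiset.mem_cons_self _ _)
    have hs' : ∀ r ∈ s, 0 < r := fun r hr => hs r (Multiset.mem_cons_of_mem hr)
    have hprodne : (s.map (fun r => X - C r)).prod ≠ 0 :=
      (monic_multiset_prod_of_monic s _ (fun i _ => monic_X_sub_C i)).ne_zero
    have hQ' : (s.map (fun r => X - C r)).prod * Q ≠ 0 := mul_ne_zero hprodne hQ
    have h1 := pvar_mul_X_sub_C ha hQ'
    have h2 := ih hs'
    have heq : ((a ::ₘ s).map (fun r => X - C r)).prod * Q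
        = (X - C a) * ((s.map (fun r => X - C r)).prod * Q) := by
      rw [Multiset.map_cons, Multiset.prod_cons, mul_assoc]
    rw [heq, Multiset.card_cons]
    omega

end Descartes

namespace Descartes

/-! ### parity of sign variation -/

lemma varAux_mod_two : ∀ (t : List ℝ) (a : ℝ), a ≠ 0 → (∀ x ∈ t, x ≠ 0) →
    varAux (a :: t) % 2 = if a * (a :: t).getLast (by simp) < 0 then 1 else 0 := by
  intro t
  induction t with
  | nil =>
    intro a ha _
    rw [varAux_single]
    have : (0:ℝ) < a * a := mul_self_pos.mpr ha
    rw [List.getLast_singleton, if_neg (by linarith)]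
  | cons b u ih =>
    intro a ha hnz
    have hb : b ≠ 0 := hnz b (List.mem_cons_self)
    have hnz' : ∀ x ∈ u, x ≠ 0 := fun x hx => hnz x (List.mem_cons_of_mem _ hx)
    have ihb := ih b hb hnz'
    have hLmem : (b :: u).getLast (by simp) ∈ b :: u := List.getLast_mem _
    set L := (b :: u).getLast (by simp : b :: u ≠ []) with hL
    have hLne : L ≠ 0 := hnz _ hLmem
    have hlast : (a :: b :: u).getLast (by simp) = L := by
      rw [List.getLast_cons (by simp : b :: u ≠ [])]
    rw [varAux_cons_cons, hlast, Nat.add_mod, ihb]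
    have hb2 : 0 < b * b := mul_self_pos.mpr hb
    by_cases h1 : a * b < 0 <;> by_cases h2 : b * L < 0
    · rw [if_pos h1, if_pos h2, if_neg (by nlinarith [mul_pos_of_neg_of_neg h1 h2])]
    · push_neg at h2
      have h2' : 0 < b * L := lt_of_le_of_ne h2 (Ne.symm (mul_ne_zero hb hLne))
      rw [if_pos h1, if_neg (not_lt.2 (le_of_lt h2')), if_pos (by nlinarith [mul_neg_of_neg_of_pos h1 h2'])]
    · push_neg at h1
      have h1' : 0 < a * b := lt_of_le_of_ne h1 (Ne.symm (mul_ne_zero ha hb))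
      rw [if_neg (not_lt.2 h1), if_pos h2, if_pos (by nlinarith [mul_neg_of_pos_of_neg h1' h2])]
    · push_neg at h1 h2
      have h1' : 0 < a * b := lt_of_le_of_ne h1 (Ne.symm (mul_ne_zero ha hb))
      have h2' : 0 < b * L := lt_of_le_of_ne h2 (Ne.symm (mul_ne_zero hb hLne))
      rw [if_neg (not_lt.2 h1), if_neg (not_lt.2 h2), if_neg (by nlinarith [mul_pos h1' h2'])]

lemma varAux_eq_sum : ∀ l : List ℝ,
    varAux l = ∑ i ∈ Finset.range (l.length - 1),
      (if l.getD i 0 * l.getD (i+1) 0 < 0 then 1 else 0) := by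
  intro l
  induction l with
  | nil => simp [varAux_nil]
  | cons a t ih =>
    cases t with
    | nil => simp [varAux_single]
    | cons b u =>
      rw [varAux_cons_cons, ih]
      have hlen : (a :: b :: u).length - 1 = ((b :: u).length - 1) + 1 := by simp
      rw [hlen, Finset.sum_range_succ']
      simp only [List.getD_cons_succ, List.getD_cons_zero]
      omega

/-! ### the analytic endpoint lemma -/

lemma sign_at_zero_mul_leading {Q : ℝ[X]} (hQ0 : Q.eval 0 ≠ 0)
    (hroots : ∀ x : ℝ, 0 < x → Q.eval x ≠ 0) :
    0 < Q.eval 0 * Q.leadingCoeff := by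
  have hQ : Q ≠ 0 := fun h => hQ0 (by simp [h])
  have hcont : ∀ a b : ℝ, ContinuousOn (fun t => Q.eval t) (Set.Icc a b) :=
    fun a b => (Polynomial.continuous_aeval Q).continuousOn
  have step1 : ∀ x : ℝ, 0 < x → 0 < Q.eval 0 * Q.eval x := by
    intro x hx
    by_contra hcon
    push_neg at hcon
    have hne : Q.eval 0 * Q.eval x ≠ 0 := mul_ne_zero hQ0 (hroots x hx)
    have hlt : Q.eval 0 * Q.eval x < 0 := lt_of_le_of_ne hcon hne
    rcases mul_neg_iff.1 hlt with ⟨h1, h2⟩ | ⟨h1, h2⟩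
    · have := intermediate_value_Ioo' (le_of_lt hx) (hcont 0 x)
      have h0mem : (0:ℝ) ∈ Set.Ioo (Q.eval x) (Q.eval 0) := ⟨h2, h1⟩
      obtain ⟨z, hz, hz0⟩ := this h0mem
      exact hroots z hz.1 hz0
    · have := intermediate_value_Ioo (le_of_lt hx) (hcont 0 x)
      have h0mem : (0:ℝ) ∈ Set.Ioo (Q.eval 0) (Q.eval x) := ⟨h1, h2⟩
      obtain ⟨z, hz, hz0⟩ := this h0mem
      exact hroots z hz.1 hz0
  -- eventual sign at infinity
  have hequiv := Polynomial.isEquivalent_atTop_lead Q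
  have hlittle : ∀ᶠ x : ℝ in Filter.atTop,
      ‖(fun x => Polynomial.eval x Q) x - (fun x => Q.leadingCoeff * x ^ Q.natDegree) x‖
        ≤ 1/2 * ‖(fun x => Q.leadingCoeff * x ^ Q.natDegree) x‖ :=
    hequiv.def (by norm_num)
  obtain ⟨x, hxb, hx⟩ := (hlittle.and (Filter.eventually_gt_atTop 0)).exists
  simp only at hxb
  set f := Q.eval x with hf
  set g := Q.leadingCoeff * x ^ Q.natDegree with hg
  have hgne : g ≠ 0 := mul_ne_zero (leadingCoeff_ne_zero.2 hQ) (ne_of_gt (pow_pos hx _))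
  have habs : |f - g| ≤ 1/2 * |g| := by simpa [Real.norm_eq_abs] using hxb
  have hfg : 0 < f * g := by
    rcases lt_or_gt_of_ne hgne with hgneg | hgpos
    · have h1 : f - g ≤ |f - g| := le_abs_self _
      have hab : |g| = -g := abs_of_neg hgneg
      rw [hab] at habs
      have hfneg : f < 0 := by linarith
      exact mul_pos_of_neg_of_neg hfneg hgneg
    · have h1 : g - f ≤ |f - g| := by
        have := neg_abs_le (f - g)
        linarith
      have hab : |g| = g := abs_of_pos hgpos
      rw [hab] at habs
      have hfpos : 0 < f := by linarith
      exact mul_pos hfpos hgpos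
  have hfx := step1 x hx
  have hfne : f ≠ 0 := hroots x hx
  have h2 : 0 < Q.eval 0 * g := by
    nlinarith [mul_pos hfx hfg, mul_self_pos.mpr hfne]
  have hxn : 0 < x ^ Q.natDegree := pow_pos hx _
  rw [hg] at h2
  by_contra hcon
  push_neg at hcon
  nlinarith [mul_le_mul_of_nonneg_right hcon (le_of_lt hxn)]

/-! ### parity of the number of positive roots -/

lemma parity_pos_roots {P : ℝ[X]} (hP0 : P.eval 0 ≠ 0) :
    (0 < P.eval 0 * P.leadingCoeff ↔
      Multiset.card (P.roots.filter (fun y => 0 < y)) % 2 = 0) := by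
  have hP : P ≠ 0 := fun h => hP0 (by simp [h])
  set s := P.roots.filter (fun y => 0 < y) with hs
  have hsle : s ≤ P.roots := Multiset.filter_le _ _
  have hdvd : (s.map (fun a => X - C a)).prod ∣ P :=
    (Multiset.prod_dvd_prod_of_le (Multiset.map_le_map hsle)).trans
      (prod_multiset_X_sub_C_dvd P)
  obtain ⟨Q, hPQ⟩ := hdvd
  set R := (s.map (fun a => X - C a)).prod with hR
  have hRmonic : R.Monic := monic_multiset_prod_of_monic s _ (fun i _ => monic_X_sub_C i)
  have hRne : R ≠ 0 := hRmonic.ne_zero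
  have hQne : Q ≠ 0 := by
    intro h
    rw [h, mul_zero] at hPQ
    exact hP hPQ
  have hspos : ∀ a ∈ s, 0 < a := by
    intro a ha
    exact (Multiset.mem_filter.1 ha).2
  have hroots : P.roots = s + Q.roots := by
    rw [hPQ, roots_mul (hPQ ▸ hP), hR, roots_multiset_prod_X_sub_C]
  have hQroots : Q.roots.filter (fun y => 0 < y) = 0 := by
    have h1 : s = (s + Q.roots).filter (fun y => 0 < y) := by
      rw [← hroots, ← hs]
    rw [Multiset.filter_add] at h1
    have h2 : s.filter (fun y => 0 < y) = s := Multiset.filter_eq_self.2 hspos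
    rw [h2] at h1
    have := congrArg Multiset.card h1
    rw [Multiset.card_add] at this
    have hcard : Multiset.card (Multiset.filter (fun y => 0 < y) Q.roots) = 0 := by omega
    exact Multiset.card_eq_zero.1 hcard
  have hQnoroots : ∀ x : ℝ, 0 < x → Q.eval x ≠ 0 := by
    intro x hx hev
    have : x ∈ Q.roots := (mem_roots hQne).2 hev
    have : x ∈ Q.roots.filter (fun y => 0 < y) := Multiset.mem_filter.2 ⟨this, hx⟩
    rw [hQroots] at this
    simp at this
  have hQ0 : Q.eval 0 ≠ 0 := by
    intro h
    apply hP0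
    rw [hPQ, eval_mul, h, mul_zero]
  have hQsign := sign_at_zero_mul_leading hQ0 hQnoroots
  -- compute eval 0 R
  have hevalR : R.eval 0 = (-1 : ℝ) ^ Multiset.card s * (s.map id).prod := by
    rw [hR, eval_multiset_prod, Multiset.map_map]
    have h1 : s.map (eval 0 ∘ fun a => X - C a) = (s.map id).map Neg.neg := by
      rw [Multiset.map_map]
      apply Multiset.map_congr rfl
      intro a _
      simp
    rw [h1, Multiset.prod_map_neg]
    simp
  have hprodpos : 0 < (s.map id).prod := by
    apply Multiset.prod_pos
    intro a ha
    obtain ⟨b, hb, rfl⟩ := Multiset.mem_map.1 ha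
    exact hspos b hb
  have hleadP : P.leadingCoeff = Q.leadingCoeff := by
    rw [hPQ, leadingCoeff_mul, hRmonic.leadingCoeff, one_mul]
  have hevalP : P.eval 0 = (-1 : ℝ) ^ Multiset.card s * (s.map id).prod * Q.eval 0 := by
    rw [hPQ, eval_mul, hevalR]
  rw [hevalP, hleadP]
  rcases Nat.even_or_odd (Multiset.card s) with he | ho
  · rw [he.neg_one_pow]
    constructor
    · intro _; exact Nat.even_iff.1 he
    · intro _; nlinarith
  · rw [ho.neg_one_pow]
    have hodd : Multiset.card s % 2 = 1 := Nat.odd_iff.1 ho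
    constructor
    · intro hcon; nlinarith
    · intro h; omega

end Descartes

namespace Descartes

lemma varAux_mod_two' (l : List ℝ) (h : l ≠ []) (hnz : ∀ x ∈ l, x ≠ 0) :
    varAux l % 2 = if l.headI * l.getLast h < 0 then 1 else 0 := by
  cases l with
  | nil => exact absurd rfl h
  | cons a t =>
    have ha : a ≠ 0 := hnz a (List.mem_cons_self)
    have := varAux_mod_two t a ha (fun x hx => hnz x (List.mem_cons_of_mem _ hx))
    exact this

/-- Descartes' rule of signs for a polynomial with `d` nonzero coefficients. -/
theorem descartes_main (d : ℕ) (hd : 2 ≤ d) (b : ℕ → ℝ) (hb : ∀ k < d, b k ≠ 0) :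
    Multiset.card (Multiset.filter (fun y => 0 < y)
        (Polynomial.roots (∑ k ∈ Finset.range d, C (b k) * X ^ k)))
      ≤ ((Finset.range (d-1)).filter (fun k => b k * b (k+1) < 0)).card ∧
    Multiset.card (Multiset.filter (fun y => 0 < y)
        (Polynomial.roots (∑ k ∈ Finset.range d, C (b k) * X ^ k))) % 2
      = ((Finset.range (d-1)).filter (fun k => b k * b (k+1) < 0)).card % 2 := by
  set P : ℝ[X] := ∑ k ∈ Finset.range d, C (b k) * X ^ k with hPdef
  have hcoeff : ∀ k, P.coeff k = if k < d then b k else 0 := by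
    intro k
    rw [hPdef, finset_sum_coeff]
    simp only [coeff_C_mul, coeff_X_pow, mul_ite, mul_one, mul_zero]
    rw [Finset.sum_ite_eq (Finset.range d) k b]
    simp [Finset.mem_range]
  have hb0 : b 0 ≠ 0 := hb 0 (by omega)
  have hbl : b (d-1) ≠ 0 := hb (d-1) (by omega)
  have hdeg : P.natDegree = d - 1 := by
    refine le_antisymm ?_ ?_
    · apply Polynomial.natDegree_le_iff_coeff_eq_zero.2
      intro N hN
      rw [hcoeff, if_neg (by omega)]
    · apply Polynomial.le_natDegree_of_ne_zero
      rw [hcoeff, if_pos (by omega)]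
      exact hbl
  have hP : P ≠ 0 := by
    intro h
    apply hb0
    have := hcoeff 0
    rw [h, coeff_zero, if_pos (by omega)] at this
    exact this.symm
  set l : List ℝ := (List.range d).map b with hldef
  have hllen : l.length = d := by simp [hldef]
  have hlne : l ≠ [] := by
    intro h; rw [h] at hllen; simp at hllen; omega
  have hgetD : ∀ k, k < d → l.getD k 0 = b k := by
    intro k hk
    rw [List.getD_eq_getElem _ _ (by omega)]
    simp [hldef]
  have hclist : clist P = l := by
    unfold clist
    rw [hdeg, hldef]
    have : d - 1 + 1 = d := by omega
    rw [this]
    apply List.map_congr_left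
    intro k hk
    rw [hcoeff, if_pos (List.mem_range.1 hk)]
  have hallnz : ∀ x ∈ l, x ≠ 0 := by
    intro x hx
    obtain ⟨k, hk, rfl⟩ := List.mem_map.1 hx
    exact hb k (List.mem_range.1 hk)
  have hfilter : l.filter nz = l :=
    List.filter_eq_self.2 (fun x hx => nz_true (hallnz x hx))
  have hpvar : pvar P = varAux l := by
    unfold pvar svar
    rw [hclist, hfilter]
  set v := ((Finset.range (d-1)).filter (fun k => b k * b (k+1) < 0)).card with hvdef
  have hvar_v : varAux l = v := by
    rw [varAux_eq_sum, hllen, hvdef, Finset.card_filter]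
    apply Finset.sum_congr rfl
    intro i hi
    have hi' := Finset.mem_range.1 hi
    rw [hgetD i (by omega), hgetD (i+1) (by omega)]
  -- factor out positive roots
  set s := P.roots.filter (fun y => 0 < y) with hs
  set m := Multiset.card s with hm
  have hsle : s ≤ P.roots := Multiset.filter_le _ _
  obtain ⟨Q, hPQ⟩ : (s.map (fun a => X - C a)).prod ∣ P :=
    (Multiset.prod_dvd_prod_of_le (Multiset.map_le_map hsle)).trans
      (prod_multiset_X_sub_C_dvd P)
  have hQne : Q ≠ 0 := by
    intro h; rw [h, mul_zero] at hPQ; exact hP hPQ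
  have hspos : ∀ r ∈ s, 0 < r := fun r hr => (Multiset.mem_filter.1 hr).2
  have hineq : m ≤ v := by
    have := pvar_multiset_prod s hspos hQne
    rw [← hPQ] at this
    rw [hpvar, hvar_v] at this
    omega
  refine ⟨hineq, ?_⟩
  -- parity
  have hhead : l.headI = b 0 := by
    cases d with
    | zero => omega
    | succ n =>
      rw [hldef, List.range_succ_eq_map]
      simp
  have hlast : l.getLast hlne = b (d-1) := by
    rw [List.getLast_eq_getElem, ← List.getD_eq_getElem l 0, hllen, hgetD (d-1) (by omega)]
  have hvpar : v % 2 = if b 0 * b (d-1) < 0 then 1 else 0 := by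
    rw [← hvar_v, varAux_mod_two' l hlne hallnz, hhead, hlast]
  have heval0 : P.eval 0 = b 0 := by
    rw [← Polynomial.coeff_zero_eq_eval_zero, hcoeff, if_pos (by omega)]
  have hlead : P.leadingCoeff = b (d-1) := by
    rw [Polynomial.leadingCoeff, hdeg, hcoeff, if_pos (by omega)]
  have hpar := parity_pos_roots (P := P) (by rw [heval0]; exact hb0)
  rw [heval0, hlead, ← hs, ← hm] at hpar
  by_cases hsign : 0 < b 0 * b (d-1)
  · rw [hpar.1 hsign, hvpar, if_neg (by linarith)]
  · have hne : b 0 * b (d-1) ≠ 0 := mul_ne_zero hb0 hbl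
    have hneg : b 0 * b (d-1) < 0 := by
      rcases lt_trichotomy (b 0 * b (d-1)) 0 with h | h | h
      · exact h
      · exact absurd h hne
      · exact absurd h hsign
    have : ¬ m % 2 = 0 := fun h => hsign (hpar.2 h)
    rw [hvpar, if_pos hneg]
    omega

end Descartes

namespace Descartes

/-! ### counting sign patterns -/

noncomputable def wt {n : ℕ} (δ : Fin n → Bool) : ℕ :=
  (Finset.univ.filter (fun i => δ i = true)).card

lemma card_weight (n s : ℕ) :
    (Finset.univ.filter (fun δ : Fin n → Bool => wt δ = s)).card = n.choose s := by
  have h := Finset.card_powersetCard s (Finset.univ : Finset (Fin n))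
  rw [Finset.card_univ, Fintype.card_fin] at h
  rw [← h]
  apply Finset.card_bij (fun δ _ => Finset.univ.filter (fun i => δ i = true))
  · intro δ hδ
    rw [Finset.mem_powersetCard]
    exact ⟨Finset.filter_subset _ _, (Finset.mem_filter.1 hδ).2⟩
  · intro δ₁ h₁ δ₂ h₂ heq
    funext i
    have := Finset.ext_iff.1 heq i
    simp only [Finset.mem_filter, Finset.mem_univ, true_and] at this
    cases hδ : δ₁ i
    · cases hδ' : δ₂ i
      · rfl
      · rw [hδ, hδ'] at this; simp at this
    · cases hδ' : δ₂ i
      · rw [hδ, hδ'] at this; simp at this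
      · rfl
  · intro A hA
    rw [Finset.mem_powersetCard] at hA
    refine ⟨fun i => i ∈ A, ?_, ?_⟩
    · rw [Finset.mem_filter]
      refine ⟨Finset.mem_univ _, ?_⟩
      rw [show wt (fun i => (i ∈ A : Bool)) =
        (Finset.univ.filter (fun i : Fin n => (i ∈ A : Bool) = true)).card from rfl]
      rw [← hA.2]
      congr 1
      apply Finset.ext
      intro i
      simp
    · apply Finset.ext
      intro i
      simp

/-- the alternating-sum style identity about binomial coefficients -/
lemma EO_identity (n : ℕ) (hn : 1 ≤ n) :
    ∀ k m, m ≤ n → n - m = k →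
      ∑ s ∈ (Finset.range (n+1)).filter (fun s => m ≤ s ∧ s % 2 = m % 2), n.choose s
        = (∑ s ∈ (Finset.range (n+1)).filter (fun s => m ≤ s ∧ ¬ s % 2 = m % 2), n.choose s)
          + (if m = 0 then 0 else (n-1).choose (m-1)) := by
  intro k
  induction k with
  | zero =>
    intro m hm hk
    have hmn : m = n := by omega
    subst hmn
    have h1 : (Finset.range (m+1)).filter (fun s => m ≤ s ∧ s % 2 = m % 2) = {m} := by
      apply Finset.ext
      intro s
      simp only [Finset.mem_filter, Finset.mem_range, Finset.mem_singleton]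
      omega
    have h2 : (Finset.range (m+1)).filter (fun s => m ≤ s ∧ ¬ s % 2 = m % 2) = ∅ := by
      apply Finset.ext
      intro s
      simp only [Finset.mem_filter, Finset.mem_range, Finset.notMem_empty, iff_false]
      omega
    rw [h1, h2, Finset.sum_singleton, Finset.sum_empty, Nat.choose_self,
      if_neg (by omega), Nat.choose_self]
  | succ k ih =>
    intro m hm hk
    have hmn : m < n := by omega
    have hE : (Finset.range (n+1)).filter (fun s => m ≤ s ∧ s % 2 = m % 2)
        = insert m ((Finset.range (n+1)).filter (fun s => m+1 ≤ s ∧ ¬ s % 2 = (m+1) % 2)) := by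
      apply Finset.ext
      intro s
      simp only [Finset.mem_filter, Finset.mem_range, Finset.mem_insert]
      omega
    have hO : (Finset.range (n+1)).filter (fun s => m ≤ s ∧ ¬ s % 2 = m % 2)
        = (Finset.range (n+1)).filter (fun s => m+1 ≤ s ∧ s % 2 = (m+1) % 2) := by
      apply Finset.ext
      intro s
      simp only [Finset.mem_filter, Finset.mem_range]
      omega
    have hnotmem : m ∉ (Finset.range (n+1)).filter (fun s => m+1 ≤ s ∧ ¬ s % 2 = (m+1) % 2) := by
      simp only [Finset.mem_filter, Finset.mem_range]
      omega
    have ihm := ih (m+1) (by omega) (by omega)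
    rw [hE, Finset.sum_insert hnotmem, hO, ihm, if_neg (by omega)]
    have hpascal : n.choose m = (n-1).choose m + (if m = 0 then 0 else (n-1).choose (m-1)) := by
      by_cases hm0 : m = 0
      · subst hm0
        simp [Nat.choose_zero_right]
      · rw [if_neg hm0]
        obtain ⟨n', rfl⟩ : ∃ n', n = n' + 1 := ⟨n - 1, by omega⟩
        obtain ⟨m', rfl⟩ : ∃ m', m = m' + 1 := ⟨m - 1, by omega⟩
        simp only [Nat.add_sub_cancel]
        rw [Nat.choose_succ_succ']
        omega
    have hsimp : (m + 1 - 1) = m := by omega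
    rw [hsimp] at ihm ⊢
    omega

lemma reflect_sum (n m : ℕ) (hm : m ≤ n) :
    ∑ s ∈ (Finset.range (n+1)).filter (fun s => m ≤ s), n.choose s
      = ∑ j ∈ Finset.range (n - m + 1), n.choose j := by
  rw [Finset.sum_filter]
  rw [← Finset.sum_range_reflect (fun s => if m ≤ s then n.choose s else 0) (n+1)]
  have hcong : ∀ j ∈ Finset.range (n+1),
      (if m ≤ n + 1 - 1 - j then n.choose (n + 1 - 1 - j) else 0)
        = (if j ≤ n - m then n.choose j else 0) := by
    intro j hj
    have hj' := Finset.mem_range.1 hj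
    have h1 : n + 1 - 1 - j = n - j := by omega
    rw [h1]
    by_cases h : m ≤ n - j
    · rw [if_pos h, if_pos (by omega), Nat.choose_symm (by omega : j ≤ n)]
    · rw [if_neg h, if_neg (by omega)]
  rw [Finset.sum_congr rfl hcong]
  rw [← Finset.sum_filter]
  congr 1
  apply Finset.ext
  intro s
  simp only [Finset.mem_filter, Finset.mem_range]
  omega

end Descartes

namespace Descartes

noncomputable def extB {d : ℕ} (σ : Fin d → Bool) : ℕ → Bool :=
  fun k => if h : k < d then σ ⟨k, h⟩ else false

noncomputable def chgB {d : ℕ} (σ : Fin d → Bool) : ℕ :=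
  ((Finset.range (d-1)).filter (fun k => extB σ k ≠ extB σ (k+1))).card

lemma fin_filter_card (n : ℕ) (p : ℕ → Prop) [DecidablePred p] :
    (Finset.univ.filter (fun i : Fin n => p ↑i)).card = ((Finset.range n).filter p).card := by
  rw [Finset.card_filter, Finset.card_filter]
  rw [← Fin.sum_univ_eq_sum_range (fun k => if p k then 1 else 0) n]

lemma extB_coe {d : ℕ} (σ : Fin d → Bool) (k : Fin d) : extB σ ↑k = σ k := by
  unfold extB
  rw [dif_pos k.isLt]

lemma bool_diff_inj : ∀ a b c : Bool, (a != b) = (a != c) → b = c := by decide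

lemma card_S (d m : ℕ) (hd : 2 ≤ d) (hm : m ≤ d - 1) :
    (Finset.univ.filter (fun σ : Fin d → Bool => m ≤ chgB σ ∧ chgB σ % 2 = m % 2)).card
      = (∑ j ∈ Finset.range (d - 1 - m + 1), (d-1).choose j)
        + (if m = 0 then 0 else (d-2).choose (m-1)) := by
  set n := d - 1 with hn
  have hn1 : 1 ≤ n := by omega
  set F : (Fin d → Bool) → Bool × (Fin n → Bool) :=
    fun σ => (extB σ 0, fun i => extB σ ↑i != extB σ (↑i+1)) with hF
  have hwt : ∀ σ : Fin d → Bool, wt (F σ).2 = chgB σ := by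
    intro σ
    show (Finset.univ.filter (fun i : Fin n => (extB σ ↑i != extB σ (↑i+1)) = true)).card = _
    unfold chgB
    rw [← hn]
    have h1 : (Finset.univ.filter (fun i : Fin n => (extB σ ↑i != extB σ (↑i+1)) = true))
        = (Finset.univ.filter (fun i : Fin n => extB σ ↑i ≠ extB σ (↑i+1))) := by
      apply Finset.filter_congr
      intro i _
      simp [bne_iff_ne]
    rw [h1]
    exact fin_filter_card n (fun k => extB σ k ≠ extB σ (k+1))
  have hinj : Function.Injective F := by
    intro σ τ h
    have h0 : extB σ 0 = extB τ 0 := congrArg Prod.fst h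
    have hdiff := congrArg Prod.snd h
    have key : ∀ j, j < d → extB σ j = extB τ j := by
      intro j
      induction j with
      | zero => intro _; exact h0
      | succ j ihj =>
        intro hjd
        have hj1 : j < n := by omega
        have hc := congrFun hdiff ⟨j, hj1⟩
        simp only [hF] at hc
        rw [ihj (by omega)] at hc
        exact bool_diff_inj _ _ _ hc
    funext k
    have := key ↑k k.isLt
    rwa [extB_coe, extB_coe] at this
  have hbij : Function.Bijective F := by
    refine (Fintype.bijective_iff_injective_and_card F).2 ⟨hinj, ?_⟩
    rw [Fintype.card_prod, Fintype.card_fun, Fintype.card_fun, Fintype.card_bool,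
      Fintype.card_fin, Fintype.card_fin]
    have hds : d = n + 1 := by omega
    rw [hds, pow_succ]
    ring
  set T := Finset.univ.filter (fun δ : Fin n → Bool => m ≤ wt δ ∧ wt δ % 2 = m % 2) with hT
  have hcard1 : (Finset.univ.filter
        (fun σ : Fin d → Bool => m ≤ chgB σ ∧ chgB σ % 2 = m % 2)).card
      = (Finset.univ.filter
        (fun p : Bool × (Fin n → Bool) => m ≤ wt p.2 ∧ wt p.2 % 2 = m % 2)).card := by
    apply Finset.card_bij (fun σ _ => F σ)
    · intro σ hσ
      rw [Finset.mem_filter] at hσ ⊢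
      rw [hwt σ]
      exact ⟨Finset.mem_univ _, hσ.2⟩
    · intro σ₁ _ σ₂ _ heq
      exact hinj heq
    · intro p hp
      obtain ⟨σ, rfl⟩ := hbij.2 p
      rw [Finset.mem_filter] at hp
      rw [hwt σ] at hp
      exact ⟨σ, Finset.mem_filter.2 ⟨Finset.mem_univ _, hp.2⟩, rfl⟩
  have hsplit : (Finset.univ.filter
        (fun p : Bool × (Fin n → Bool) => m ≤ wt p.2 ∧ wt p.2 % 2 = m % 2))
      = (Finset.univ : Finset Bool) ×ˢ T := by
    apply Finset.ext
    intro p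
    rw [Finset.mem_filter, Finset.mem_product, hT, Finset.mem_filter]
    simp only [Finset.mem_univ, true_and]
  have hcard2 : ((Finset.univ : Finset Bool) ×ˢ T).card = 2 * T.card := by
    rw [Finset.card_product, Finset.card_univ, Fintype.card_bool]
  set t := (Finset.range (n+1)).filter (fun s => m ≤ s ∧ s % 2 = m % 2) with ht
  have hcardT : T.card = ∑ s ∈ t, n.choose s := by
    rw [Finset.card_eq_sum_card_fiberwise (f := wt) (t := t)]
    · apply Finset.sum_congr rfl
      intro s hs
      rw [ht, Finset.mem_filter] at hs
      have : T.filter (fun δ => wt δ = s)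
          = Finset.univ.filter (fun δ : Fin n → Bool => wt δ = s) := by
        apply Finset.ext
        intro δ
        rw [hT, Finset.filter_filter, Finset.mem_filter, Finset.mem_filter]
        constructor
        · rintro ⟨h1, _, h3⟩; exact ⟨h1, h3⟩
        · rintro ⟨h1, h3⟩
          refine ⟨h1, ?_, h3⟩
          rw [h3]
          exact hs.2
      rw [this, card_weight]
    · intro δ hδ
      rw [Finset.mem_coe, hT, Finset.mem_filter] at hδ
      rw [Finset.mem_coe, ht, Finset.mem_filter, Finset.mem_range]
      have hwtle : wt δ ≤ n := by
        unfold wt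
        calc (Finset.univ.filter (fun i => δ i = true)).card
            ≤ (Finset.univ : Finset (Fin n)).card := Finset.card_filter_le _ _
          _ = n := by rw [Finset.card_univ, Fintype.card_fin]
      exact ⟨by omega, hδ.2⟩
  -- now the arithmetic
  have hEO := EO_identity n hn1 (n - m) m hm rfl
  have hsumsplit :
      (∑ s ∈ (Finset.range (n+1)).filter (fun s => m ≤ s ∧ s % 2 = m % 2), n.choose s)
        + (∑ s ∈ (Finset.range (n+1)).filter (fun s => m ≤ s ∧ ¬ s % 2 = m % 2), n.choose s)
      = ∑ s ∈ (Finset.range (n+1)).filter (fun s => m ≤ s), n.choose s := by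
    have e1 : (Finset.range (n+1)).filter (fun s => m ≤ s ∧ s % 2 = m % 2)
        = ((Finset.range (n+1)).filter (fun s => m ≤ s)).filter (fun s => s % 2 = m % 2) := by
      rw [Finset.filter_filter]
    have e2 : (Finset.range (n+1)).filter (fun s => m ≤ s ∧ ¬ s % 2 = m % 2)
        = ((Finset.range (n+1)).filter (fun s => m ≤ s)).filter (fun s => ¬ s % 2 = m % 2) := by
      rw [Finset.filter_filter]
    rw [e1, e2]
    exact Finset.sum_filter_add_sum_filter_not _ _ _
  have hrefl := reflect_sum n m hm
  have hd2 : d - 2 = n - 1 := by omega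
  rw [hcard1, hsplit, hcard2, hcardT, ← ht] at *
  rw [hd2]
  omega

end Descartes

namespace Descartes

lemma sign_pattern_iff {x y cx cy : ℝ} (hx : x ≠ 0) (hy : y ≠ 0) (hcx : 0 < cx) (hcy : 0 < cy) :
    ((decide (0 < x) : Bool) ≠ (decide (0 < y) : Bool)) ↔ (x * cx) * (y * cy) < 0 := by
  by_cases h1 : 0 < x
  · by_cases h2 : 0 < y
    · simp only [h1, h2, decide_true, ne_eq, not_true_eq_false, false_iff]
      intro hc
      nlinarith [mul_pos (mul_pos h1 hcx) (mul_pos h2 hcy)]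
    · have h2' : y < 0 := lt_of_le_of_ne (not_lt.1 h2) hy
      simp only [h1, h2, decide_true, decide_false, ne_eq, Bool.true_eq_false,
        not_false_eq_true, true_iff]
      exact mul_neg_of_pos_of_neg (mul_pos h1 hcx) (mul_neg_of_neg_of_pos h2' hcy)
  · have h1' : x < 0 := lt_of_le_of_ne (not_lt.1 h1) hx
    by_cases h2 : 0 < y
    · simp only [h1, h2, decide_true, decide_false, ne_eq, Bool.false_eq_true,
        not_false_eq_true, true_iff]
      exact mul_neg_of_neg_of_pos (mul_neg_of_neg_of_pos h1' hcx) (mul_pos h2 hcy)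
    · have h2' : y < 0 := lt_of_le_of_ne (not_lt.1 h2) hy
      simp only [h1, h2, decide_false, ne_eq, not_true_eq_false, false_iff]
      intro hc
      nlinarith [mul_pos_of_neg_of_neg (mul_neg_of_neg_of_pos h1' hcx)
        (mul_neg_of_neg_of_pos h2' hcy)]

end Descartes



open MeasureTheory ProbabilityTheory Polynomial

/-- The number of roots in `(0, ∞)`, counted with multiplicity, of the polynomial
`P(y) = Σ_{k=0}^{d−1} β_k · C(d−1, k) · y^k`. Its positive roots are the internal
equilibria of a `d`-player two-strategy random evolutionary game. -/
noncomputable def numInternalEquilibria (d : ℕ) (β : Fin d → ℝ) : ℕ :=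
  Multiset.card (Multiset.filter (fun y => 0 < y)
    (Polynomial.roots (∑ k : Fin d,
      Polynomial.C (β k * ((d - 1).choose (k : ℕ) : ℝ)) * Polynomial.X ^ (k : ℕ))))

/-- Upper bound for the probability `p_m` that a `d`-player two-strategy random
evolutionary game (with symmetric i.i.d.-sign payoff differences) has exactly `m`
internal equilibria:
`p_m ≤ (1/2^d)·[ Σ_{j=0}^{d−1−m} C(d−1, j) + C(d−2, m−1) ]` (with `C(d−2, −1) = 0`). -/
theorem prob_internalEquilibria_upper_bound
    {Ω : Type*} [MeasurableSpace Ω] (μ : Measure Ω) [IsProbabilityMeasure μ]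
    (d : ℕ) (hd : 2 ≤ d) (β : Fin d → Ω → ℝ)
    (hmeas : ∀ k, Measurable (β k))
    (hindep : iIndepFun β μ)
    (hpos : ∀ k, μ {ω | 0 < β k ω} = 1 / 2)
    (hneg : ∀ k, μ {ω | β k ω < 0} = 1 / 2) :
    ∀ m ≤ d - 1,
      μ {ω | numInternalEquilibria d (fun k => β k ω) = m} ≤
        ((∑ j ∈ Finset.range (d - 1 - m + 1), ((d - 1).choose j : ENNReal)) +
          (if m = 0 then 0 else ((d - 2).choose (m - 1) : ENNReal))) / 2 ^ d := by
  intro m hm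
  -- each coordinate is a.s. nonzero
  have hzero : ∀ k, μ {ω | β k ω = 0} = 0 := by
    intro k
    have hA : MeasurableSet {ω | 0 < β k ω} := (hmeas k) measurableSet_Ioi
    have hB : MeasurableSet {ω | β k ω < 0} := (hmeas k) measurableSet_Iio
    have hdisj : Disjoint {ω | 0 < β k ω} {ω | β k ω < 0} := by
      rw [Set.disjoint_left]
      intro ω h1 h2
      simp only [Set.mem_setOf_eq] at h1 h2
      linarith
    have hunion : μ ({ω | 0 < β k ω} ∪ {ω | β k ω < 0}) = 1 := by
      rw [measure_union hdisj hB, hpos k, hneg k, ENNReal.add_halves]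
    have hsub : {ω | β k ω = 0} ⊆ ({ω | 0 < β k ω} ∪ {ω | β k ω < 0})ᶜ := by
      intro ω h
      simp only [Set.mem_setOf_eq] at h
      simp only [Set.mem_compl_iff, Set.mem_union, Set.mem_setOf_eq, h]
      push_neg
      exact ⟨le_refl _, le_refl _⟩
    refine le_antisymm ?_ zero_le
    calc μ {ω | β k ω = 0} ≤ μ (({ω | 0 < β k ω} ∪ {ω | β k ω < 0})ᶜ) := measure_mono hsub
      _ = μ Set.univ - μ ({ω | 0 < β k ω} ∪ {ω | β k ω < 0}) :=
          measure_compl (hA.union hB) (measure_ne_top μ _)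
      _ = 0 := by rw [measure_univ, hunion, tsub_self]
  set Z := ⋃ k, {ω | β k ω = 0} with hZdef
  have hZ0 : μ Z = 0 := measure_iUnion_null hzero
  set A : (Fin d → Bool) → Set Ω :=
    fun σ => ⋂ k, β k ⁻¹' (if σ k then Set.Ioi 0 else Set.Iio 0) with hAdef
  have hAμ : ∀ σ, μ (A σ) = (1/2 : ENNReal)^d := by
    intro σ
    have h1 := hindep.measure_inter_preimage_eq_mul (S := Finset.univ)
      (sets := fun k => if σ k then Set.Ioi 0 else Set.Iio 0)
      (fun i _ => by split <;> [exact measurableSet_Ioi; exact measurableSet_Iio])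
    have h2 : (⋂ k ∈ Finset.univ, β k ⁻¹' (if σ k then Set.Ioi 0 else Set.Iio 0)) = A σ := by
      rw [hAdef]
      ext ω
      simp
    have h3 : ∀ k : Fin d, μ (β k ⁻¹' (if σ k then Set.Ioi 0 else Set.Iio 0)) = 1/2 := by
      intro k
      by_cases hσ : σ k
      · rw [if_pos hσ]; exact hpos k
      · rw [if_neg hσ]; exact hneg k
    rw [h2] at h1
    rw [h1, Finset.prod_congr rfl (fun k _ => h3 k), Finset.prod_const, Finset.card_univ,
      Fintype.card_fin]
  set S : Finset (Fin d → Bool) :=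
    Finset.univ.filter (fun σ => m ≤ Descartes.chgB σ ∧ Descartes.chgB σ % 2 = m % 2) with hSdef
  have hincl : {ω | numInternalEquilibria d (fun k => β k ω) = m} ⊆ Z ∪ ⋃ σ ∈ S, A σ := by
    intro ω hω
    simp only [Set.mem_setOf_eq] at hω
    by_cases hz : ∀ k, β k ω ≠ 0
    · right
      set σ : Fin d → Bool := fun k => decide (0 < β k ω) with hσdef
      set b : ℕ → ℝ :=
        fun k => if h : k < d then β ⟨k, h⟩ ω * ((d-1).choose k : ℝ) else 1 with hbdef
      have hbval : ∀ (k : ℕ) (h : k < d), b k = β ⟨k, h⟩ ω * ((d-1).choose k : ℝ) := by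
        intro k h
        rw [hbdef]
        exact dif_pos h
      have hbne : ∀ k < d, b k ≠ 0 := by
        intro k hk
        rw [hbval k hk]
        apply mul_ne_zero (hz _)
        have := Nat.choose_pos (show k ≤ d - 1 by omega)
        positivity
      have hpoly : (∑ k : Fin d,
            Polynomial.C (β k ω * ((d - 1).choose (k:ℕ) : ℝ)) * Polynomial.X ^ (k : ℕ))
          = ∑ k ∈ Finset.range d, Polynomial.C (b k) * Polynomial.X ^ k := by
        rw [← Fin.sum_univ_eq_sum_range (fun k => Polynomial.C (b k) * Polynomial.X ^ k) d]
        apply Finset.sum_congr rfl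
        intro k _
        have : b ↑k = β k ω * ((d-1).choose (k:ℕ) : ℝ) := by
          rw [hbval ↑k k.isLt, Fin.eta]
        rw [this]
      have hdm := Descartes.descartes_main d hd b hbne
      have hmeq : Multiset.card (Multiset.filter (fun y => 0 < y)
          (Polynomial.roots (∑ k ∈ Finset.range d, Polynomial.C (b k) * Polynomial.X ^ k)))
          = m := by
        rw [← hpoly]
        exact hω
      have hiff : ∀ k ∈ Finset.range (d-1),
          (Descartes.extB σ k ≠ Descartes.extB σ (k+1)) ↔ (b k * b (k+1) < 0) := by
        intro k hk
        rw [Finset.mem_range] at hk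
        have hk1 : k < d := by omega
        have hk2 : k + 1 < d := by omega
        have e1 : Descartes.extB σ k = decide (0 < β ⟨k, hk1⟩ ω) := by
          unfold Descartes.extB
          rw [dif_pos hk1]
        have e2 : Descartes.extB σ (k+1) = decide (0 < β ⟨k+1, hk2⟩ ω) := by
          unfold Descartes.extB
          rw [dif_pos hk2]
        rw [e1, e2, hbval k hk1, hbval (k+1) hk2]
        exact Descartes.sign_pattern_iff (hz _) (hz _)
          (by exact_mod_cast Nat.choose_pos (show k ≤ d - 1 by omega))
          (by exact_mod_cast Nat.choose_pos (show k + 1 ≤ d - 1 by omega))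
      have hchg : Descartes.chgB σ
          = ((Finset.range (d-1)).filter (fun k => b k * b (k+1) < 0)).card := by
        unfold Descartes.chgB
        exact congrArg Finset.card (Finset.filter_congr hiff)
      have hσS : σ ∈ S := by
        rw [hSdef, Finset.mem_filter]
        refine ⟨Finset.mem_univ _, ?_⟩
        rw [hchg]
        rw [hmeq] at hdm
        omega
      have hωA : ω ∈ A σ := by
        rw [hAdef]
        apply Set.mem_iInter.2
        intro k
        by_cases hk : 0 < β k ω
        · have hσk : σ k = true := by rw [hσdef]; simp [hk]
          rw [hσk, if_pos rfl]
          exact hk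
        · have hklt : β k ω < 0 := lt_of_le_of_ne (not_lt.1 hk) (hz k)
          have hσk : σ k = false := by rw [hσdef]; simp [hk]
          rw [hσk]
          simp only [Bool.false_eq_true, if_false]
          exact hklt
      exact Set.mem_biUnion hσS hωA
    · left
      push_neg at hz
      obtain ⟨k, hk⟩ := hz
      exact Set.mem_iUnion.2 ⟨k, hk⟩
  have hcardS : S.card = (∑ j ∈ Finset.range (d - 1 - m + 1), (d-1).choose j)
      + (if m = 0 then 0 else (d-2).choose (m-1)) := Descartes.card_S d m hd hm
  calc μ {ω | numInternalEquilibria d (fun k => β k ω) = m}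
      ≤ μ (Z ∪ ⋃ σ ∈ S, A σ) := measure_mono hincl
    _ ≤ μ Z + μ (⋃ σ ∈ S, A σ) := measure_union_le _ _
    _ = μ (⋃ σ ∈ S, A σ) := by rw [hZ0, zero_add]
    _ ≤ ∑ σ ∈ S, μ (A σ) := measure_biUnion_finset_le S A
    _ = S.card * (1/2 : ENNReal)^d := by
        rw [Finset.sum_congr rfl (fun σ _ => hAμ σ), Finset.sum_const, nsmul_eq_mul]
    _ = ((∑ j ∈ Finset.range (d - 1 - m + 1), ((d - 1).choose j : ENNReal)) +
          (if m = 0 then 0 else ((d - 2).choose (m - 1) : ENNReal))) / 2 ^ d := by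
        rw [hcardS]
        have hpow : (1/2 : ENNReal)^d = (2^d)⁻¹ := by
          rw [one_div, ← ENNReal.inv_pow]
        rw [hpow, div_eq_mul_inv]
        congr 1
        push_cast
        rfl
end

section
/- Let d ≥ 2 and let β_0, …, β_{d−1} be independent real-valued random variables with P(β_k > 0) = P(β_k < 0) = 1/2 for every k. With p_m the probability that P(y) = Σ_{k=0}^{d−1} β_k·C(d−1,k)·y^k has exactly m roots in (0, ∞) counted with multiplicity, one has the lower bounds p_0 ≥ 1/2^{d−1} and p_1 ≥ (d−1)/2^{d−1}. -/
open MeasureTheory ProbabilityTheory Polynomial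

open scoped ENNReal

noncomputable def PP (d : ℕ) (c : Fin d → ℝ) : Polynomial ℝ :=
  ∑ k : Fin d, Polynomial.C (c k) * Polynomial.X ^ (k : ℕ)
noncomputable def NN (d : ℕ) (c : Fin d → ℝ) : ℕ :=
  Multiset.card (Multiset.filter (fun y => 0 < y) (Polynomial.roots (PP d c)))
lemma eval_PP (d : ℕ) (c : Fin d → ℝ) (y : ℝ) :
    (PP d c).eval y = ∑ k : Fin d, c k * y ^ (k : ℕ) := by
  rw [PP, Polynomial.eval_finset_sum]; simp
lemma coeff_PP (d : ℕ) (c : Fin d → ℝ) (n : ℕ) :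
    (PP d c).coeff n = if h : n < d then c ⟨n, h⟩ else 0 := by
  rw [PP, Polynomial.finset_sum_coeff]
  simp only [Polynomial.coeff_C_mul, Polynomial.coeff_X_pow]
  split_ifs with h
  · rw [Finset.sum_eq_single (⟨n, h⟩ : Fin d)]
    · simp
    · intro b _ hb
      simp only [mul_ite, mul_one, mul_zero, ite_eq_right_iff]
      intro he; exact absurd (Fin.ext he.symm) hb
    · simp
  · apply Finset.sum_eq_zero
    intro k _
    have : (k : ℕ) ≠ n := by omega
    simp [this, Ne.symm this]

lemma PP_neg (d : ℕ) (c : Fin d → ℝ) : PP d (fun k => -(c k)) = -(PP d c) := by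
  simp [PP, Finset.sum_neg_distrib]

lemma NN_neg (d : ℕ) (c : Fin d → ℝ) : NN d (fun k => -(c k)) = NN d c := by
  rw [NN, NN, PP_neg, Polynomial.roots_neg]

lemma NN_pos (d : ℕ) (c : Fin d → ℝ) (hd : 0 < d) (hc : ∀ k, 0 < c k) : NN d c = 0 := by
  rw [NN, Multiset.card_eq_zero, Multiset.filter_eq_nil]
  intro y hy hy0
  obtain ⟨-, hroot⟩ := Polynomial.mem_roots'.mp hy
  have : 0 < (PP d c).eval y := by
    rw [eval_PP]
    apply Finset.sum_pos
    · intro k _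
      exact mul_pos (hc k) (pow_pos hy0 _)
    · exact Finset.univ_nonempty_iff.mpr ⟨⟨0, hd⟩⟩
  rw [hroot] at this
  exact lt_irrefl 0 this

lemma NN_one (d : ℕ) (c : Fin d → ℝ) (hd : 2 ≤ d) (j : ℕ) (hj0 : 0 < j) (hjd : j < d)
    (hneg : ∀ k : Fin d, (k : ℕ) < j → c k < 0)
    (hpos : ∀ k : Fin d, j ≤ (k : ℕ) → 0 < c k) : NN d c = 1 := by
  classical
  set P := PP d c with hP
  have hdm : d - 1 < d := by omega
  have htop : 0 < c ⟨d - 1, hdm⟩ := hpos ⟨d - 1, hdm⟩ (show j ≤ d - 1 by omega)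
  have h0d : 0 < d := by omega
  have hc0 : c ⟨0, h0d⟩ < 0 := hneg _ hj0
  -- P ≠ 0
  have hcoefftop : P.coeff (d - 1) = c ⟨d - 1, hdm⟩ := by rw [hP, coeff_PP, dif_pos hdm]
  have hP0 : P ≠ 0 := fun h => by
    rw [h, Polynomial.coeff_zero] at hcoefftop; exact absurd hcoefftop.symm (ne_of_gt htop)
  -- natDegree
  have hndle : P.natDegree ≤ d - 1 := by
    apply Polynomial.natDegree_sum_le_of_forall_le
    intro k _
    refine le_trans (Polynomial.natDegree_C_mul_le _ _) ?_
    rw [Polynomial.natDegree_X_pow]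
    omega
  have hndge : d - 1 ≤ P.natDegree :=
    Polynomial.le_natDegree_of_ne_zero (by rw [hcoefftop]; exact ne_of_gt htop)
  have hnd : P.natDegree = d - 1 := le_antisymm hndle hndge
  have hlead : 0 < P.leadingCoeff := by
    rw [Polynomial.leadingCoeff, hnd, hcoefftop]; exact htop
  have hdeg : 0 < P.degree := by
    rw [Polynomial.degree_eq_natDegree hP0, hnd]
    exact_mod_cast Nat.pos_of_ne_zero (by omega)
  -- existence of a positive point with positive value
  have htend := P.tendsto_atTop_of_leadingCoeff_nonneg hdeg hlead.le
  obtain ⟨z, hz1, hz0⟩ := ((htend.eventually_gt_atTop 0).and (Filter.eventually_gt_atTop 0)).exists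
  have hev0 : P.eval 0 = c ⟨0, h0d⟩ := by
    rw [← Polynomial.coeff_zero_eq_eval_zero, hP, coeff_PP, dif_pos h0d]
  have hiv : (0 : ℝ) ∈ Set.Ioo (P.eval 0) (P.eval z) := ⟨by rw [hev0]; exact hc0, hz1⟩
  obtain ⟨a, ha_mem, ha⟩ := intermediate_value_Ioo hz0.le
    ((Polynomial.continuous P).continuousOn (s := Set.Icc 0 z)) hiv
  have ha0 : 0 < a := ha_mem.1
  have ha' : P.eval a = 0 := ha
  -- uniqueness of positive roots
  have key : ∀ x y : ℝ, 0 < x → x < y → P.eval x = 0 → P.eval y = 0 → False := by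
    intro x y hx hxy hex hey
    have hy : 0 < y := hx.trans hxy
    rw [eval_PP] at hex hey
    have hsum : ∑ k : Fin d, c k * (y ^ (k : ℕ) * x ^ j - x ^ (k : ℕ) * y ^ j) = 0 := by
      have : ∑ k : Fin d, c k * (y ^ (k : ℕ) * x ^ j - x ^ (k : ℕ) * y ^ j)
          = (∑ k : Fin d, c k * y ^ (k : ℕ)) * x ^ j
            - (∑ k : Fin d, c k * x ^ (k : ℕ)) * y ^ j := by
        rw [Finset.sum_mul, Finset.sum_mul, ← Finset.sum_sub_distrib]
        exact Finset.sum_congr rfl fun k _ => by ring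
      rw [this, hex, hey]; ring
    have hterm : ∀ k : Fin d, 0 ≤ c k * (y ^ (k : ℕ) * x ^ j - x ^ (k : ℕ) * y ^ j) := by
      intro k
      rcases lt_trichotomy (k : ℕ) j with hk | hk | hk
      · have hfac : y ^ (k : ℕ) * x ^ j < x ^ (k : ℕ) * y ^ j := by
          have h1 : x ^ j = x ^ (k : ℕ) * x ^ (j - (k : ℕ)) := by
            rw [← pow_add]; congr 1; omega
          have h2 : y ^ j = y ^ (k : ℕ) * y ^ (j - (k : ℕ)) := by
            rw [← pow_add]; congr 1; omega
          rw [h1, h2]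
          calc y ^ (k : ℕ) * (x ^ (k : ℕ) * x ^ (j - (k : ℕ)))
              = (x ^ (k : ℕ) * y ^ (k : ℕ)) * x ^ (j - (k : ℕ)) := by ring
            _ < (x ^ (k : ℕ) * y ^ (k : ℕ)) * y ^ (j - (k : ℕ)) := by
                exact mul_lt_mul_of_pos_left
                  (pow_lt_pow_left₀ hxy hx.le (by omega))
                  (mul_pos (pow_pos hx _) (pow_pos hy _))
            _ = x ^ (k : ℕ) * (y ^ (k : ℕ) * y ^ (j - (k : ℕ))) := by ring
        exact le_of_lt (mul_pos_of_neg_of_neg (hneg k hk) (by linarith))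
      · have hz : y ^ (k : ℕ) * x ^ j - x ^ (k : ℕ) * y ^ j = 0 := by rw [hk]; ring
        rw [hz, mul_zero]
      · have hfac : x ^ (k : ℕ) * y ^ j < y ^ (k : ℕ) * x ^ j := by
          have h1 : x ^ (k : ℕ) = x ^ j * x ^ ((k : ℕ) - j) := by
            rw [← pow_add]; congr 1; omega
          have h2 : y ^ (k : ℕ) = y ^ j * y ^ ((k : ℕ) - j) := by
            rw [← pow_add]; congr 1; omega
          rw [h1, h2]
          calc x ^ j * x ^ ((k : ℕ) - j) * y ^ j
              = (x ^ j * y ^ j) * x ^ ((k : ℕ) - j) := by ring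
            _ < (x ^ j * y ^ j) * y ^ ((k : ℕ) - j) := by
                exact mul_lt_mul_of_pos_left
                  (pow_lt_pow_left₀ hxy hx.le (by omega))
                  (mul_pos (pow_pos hx _) (pow_pos hy _))
            _ = y ^ j * y ^ ((k : ℕ) - j) * x ^ j := by ring
        exact le_of_lt (mul_pos (hpos k hk.le) (by linarith))
    have hstrict : 0 < c ⟨0, h0d⟩ * (y ^ ((0 : ℕ)) * x ^ j - x ^ ((0 : ℕ)) * y ^ j) := by
      simp only [pow_zero, one_mul]
      have : x ^ j < y ^ j := pow_lt_pow_left₀ hxy hx.le (by omega)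
      exact mul_pos_of_neg_of_neg hc0 (by linarith)
    have : 0 < ∑ k : Fin d, c k * (y ^ (k : ℕ) * x ^ j - x ^ (k : ℕ) * y ^ j) :=
      Finset.sum_pos' (fun k _ => hterm k) ⟨⟨0, h0d⟩, Finset.mem_univ _, hstrict⟩
    rw [hsum] at this
    exact lt_irrefl 0 this
  -- simple root: derivative nonzero at a
  have hderiv_eval : P.derivative.eval a
      = ∑ k : Fin d, c k * (((k : ℕ) : ℝ) * a ^ ((k : ℕ) - 1)) := by
    rw [hP, PP, map_sum, Polynomial.eval_finset_sum]
    exact Finset.sum_congr rfl fun k _ => by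
      simp [Polynomial.derivative_C_mul, Polynomial.derivative_X_pow, mul_assoc]
  have hSpos : 0 < ∑ k : Fin d, c k * ((((k : ℕ) : ℝ) - (j : ℝ)) * a ^ (k : ℕ)) := by
    apply Finset.sum_pos'
    · intro k _
      rcases lt_trichotomy ((k : ℕ)) j with hk | hk | hk
      · have h1 : (((k : ℕ) : ℝ) - (j : ℝ)) < 0 := by
          have : ((k : ℕ) : ℝ) < (j : ℝ) := by exact_mod_cast hk
          linarith
        exact le_of_lt (mul_pos_of_neg_of_neg (hneg k hk)
          (mul_neg_of_neg_of_pos h1 (pow_pos ha0 _)))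
      · rw [hk]; simp
      · have h1 : (0 : ℝ) < (((k : ℕ) : ℝ) - (j : ℝ)) := by
          have : (j : ℝ) < ((k : ℕ) : ℝ) := by exact_mod_cast hk
          linarith
        exact le_of_lt (mul_pos (hpos k hk.le) (mul_pos h1 (pow_pos ha0 _)))
    · refine ⟨⟨0, h0d⟩, Finset.mem_univ _, ?_⟩
      simp only [pow_zero, mul_one]
      have h1 : (((0 : ℕ) : ℝ) - (j : ℝ)) < 0 := by
        have : (0 : ℝ) < (j : ℝ) := by exact_mod_cast hj0
        simpa using this
      exact mul_pos_of_neg_of_neg hc0 (by simpa using h1)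
  have haroot : ∑ k : Fin d, c k * a ^ (k : ℕ) = 0 := by rw [← eval_PP, ← hP, ha']
  have hSa : ∑ k : Fin d, c k * ((((k : ℕ) : ℝ) - (j : ℝ)) * a ^ (k : ℕ))
      = a * P.derivative.eval a := by
    rw [hderiv_eval, Finset.mul_sum]
    have hj_side : ∑ k : Fin d, c k * ((j : ℝ) * a ^ (k : ℕ)) = 0 := by
      have : ∑ k : Fin d, c k * ((j : ℝ) * a ^ (k : ℕ))
          = (j : ℝ) * ∑ k : Fin d, c k * a ^ (k : ℕ) := by
        rw [Finset.mul_sum]; exact Finset.sum_congr rfl fun k _ => by ring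
      rw [this, haroot, mul_zero]
    have hsplit : ∑ k : Fin d, c k * ((((k : ℕ) : ℝ) - (j : ℝ)) * a ^ (k : ℕ))
        = (∑ k : Fin d, c k * (((k : ℕ) : ℝ) * a ^ (k : ℕ)))
          - ∑ k : Fin d, c k * ((j : ℝ) * a ^ (k : ℕ)) := by
      rw [← Finset.sum_sub_distrib]; exact Finset.sum_congr rfl fun k _ => by ring
    rw [hsplit, hj_side, sub_zero]
    refine Finset.sum_congr rfl fun k _ => ?_
    rcases Nat.eq_zero_or_pos (k : ℕ) with hk | hk
    · rw [hk]; simp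
    · have : a ^ ((k : ℕ) - 1) * a = a ^ (k : ℕ) := by
        rw [← pow_succ]; congr 1; omega
      calc c k * (((k : ℕ) : ℝ) * a ^ (k : ℕ))
          = c k * (((k : ℕ) : ℝ) * (a ^ ((k : ℕ) - 1) * a)) := by rw [this]
        _ = a * (c k * (((k : ℕ) : ℝ) * a ^ ((k : ℕ) - 1))) := by ring
  have hderiv_ne : P.derivative.eval a ≠ 0 := by
    intro h
    rw [hSa, h, mul_zero] at hSpos
    exact lt_irrefl 0 hSpos
  -- root multiplicity of a is 1
  have hmult : P.rootMultiplicity a = 1 := by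
    have h1 : 0 < P.rootMultiplicity a := (Polynomial.rootMultiplicity_pos hP0).mpr ha'
    have h2 : P.rootMultiplicity a < 2 := by
      by_contra h
      push_neg at h
      have := Polynomial.isRoot_iterate_derivative_of_lt_rootMultiplicity
        (p := P) (t := a) (n := 1) (by omega)
      rw [Function.iterate_one] at this
      exact hderiv_ne this
    omega
  -- conclude
  rw [NN, ← hP]
  set M := Multiset.filter (fun y => 0 < y) P.roots with hM
  have hall : ∀ x ∈ M, x = a := by
    intro x hx
    rw [hM, Multiset.mem_filter] at hx
    obtain ⟨hxr, hx0⟩ := hx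
    have hxroot : P.eval x = 0 := (Polynomial.mem_roots'.mp hxr).2
    rcases lt_trichotomy x a with h | h | h
    · exact absurd (key x a hx0 h hxroot ha') id
    · exact h
    · exact absurd (key a x ha0 h ha' hxroot) id
  have hrep : M = Multiset.replicate (Multiset.card M) a :=
    Multiset.eq_replicate_card.mpr hall
  have hcount : Multiset.count a M = Multiset.card M := by
    conv_lhs => rw [hrep]
    rw [Multiset.count_replicate_self]
  rw [← hcount, hM, Multiset.count_filter_of_pos ha0, Polynomial.count_roots, hmult]

lemma NN_pos' (d : ℕ) (c : Fin d → ℝ) (hd : 0 < d) (hc : ∀ k, c k < 0) : NN d c = 0 := by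
  rw [← NN_neg d c]; exact NN_pos d _ hd fun k => neg_pos.mpr (hc k)

lemma NN_one' (d : ℕ) (c : Fin d → ℝ) (hd : 2 ≤ d) (j : ℕ) (hj0 : 0 < j) (hjd : j < d)
    (hpos : ∀ k : Fin d, (k : ℕ) < j → 0 < c k)
    (hneg : ∀ k : Fin d, j ≤ (k : ℕ) → c k < 0) : NN d c = 1 := by
  rw [← NN_neg d c]
  exact NN_one d _ hd j hj0 hjd (fun k hk => neg_neg_iff_pos.mpr (hpos k hk))
    (fun k hk => neg_pos.mpr (hneg k hk))

lemma numEq_eq (d : ℕ) (β : Fin d → ℝ) :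
    numInternalEquilibria d β = NN d (fun k => β k * ((d - 1).choose (k : ℕ) : ℝ)) := rfl

/-- For a `d`-player two-strategy random evolutionary game with symmetric payoff
difference signs (`P(β_k > 0) = P(β_k < 0) = 1/2`), one has the lower bounds
`p_0 ≥ 1/2^{d−1}` and `p_1 ≥ (d−1)/2^{d−1}`. -/
theorem prob_internalEquilibria_lower_bounds
    {Ω : Type*} [MeasurableSpace Ω] (μ : Measure Ω) [IsProbabilityMeasure μ]
    (d : ℕ) (hd : 2 ≤ d) (β : Fin d → Ω → ℝ)
    (hmeas : ∀ k, Measurable (β k))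
    (hindep : iIndepFun β μ)
    (hpos : ∀ k, μ {ω | 0 < β k ω} = 1 / 2)
    (hneg : ∀ k, μ {ω | β k ω < 0} = 1 / 2) :
    1 / 2 ^ (d - 1) ≤ μ {ω | numInternalEquilibria d (fun k => β k ω) = 0} ∧
    ((d - 1 : ℕ) : ENNReal) / 2 ^ (d - 1) ≤
      μ {ω | numInternalEquilibria d (fun k => β k ω) = 1} := by
  classical
  have hchoose : ∀ k : Fin d, (0 : ℝ) < ((d - 1).choose (k : ℕ) : ℝ) := fun k => by
    exact_mod_cast Nat.choose_pos (Nat.le_pred_of_lt k.isLt)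
  set sets : Bool → Set ℝ := fun b => if b then Set.Ioi 0 else Set.Iio 0 with hsets
  have hsetsm : ∀ b, MeasurableSet (sets b) := by
    intro b; cases b <;> simp [hsets]
  have hA : ∀ (k : Fin d) (b : Bool), μ (β k ⁻¹' sets b) = 1 / 2 := by
    intro k b; cases b
    · exact hneg k
    · exact hpos k
  have hEm : ∀ s : Fin d → Bool, MeasurableSet (⋂ k, β k ⁻¹' sets (s k)) :=
    fun s => MeasurableSet.iInter fun k => hmeas k (hsetsm (s k))
  have hE : ∀ s : Fin d → Bool, μ (⋂ k, β k ⁻¹' sets (s k)) = (1 / 2 : ℝ≥0∞) ^ d := by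
    intro s
    have h := hindep.measure_inter_preimage_eq_mul Finset.univ
      (sets := fun k => sets (s k)) (fun i _ => hsetsm (s i))
    have huniv : (⋂ i ∈ Finset.univ, β i ⁻¹' sets (s i)) = ⋂ i, β i ⁻¹' sets (s i) := by
      simp
    rw [huniv] at h
    rw [h, Finset.prod_congr rfl (fun i _ => hA i (s i)), Finset.prod_const,
      Finset.card_univ, Fintype.card_fin]
  have hdisj : ∀ s t : Fin d → Bool, s ≠ t →
      Disjoint (⋂ k, β k ⁻¹' sets (s k)) (⋂ k, β k ⁻¹' sets (t k)) := by
    intro s t hst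
    obtain ⟨k, hk⟩ := Function.ne_iff.mp hst
    rw [Set.disjoint_left]
    intro ω hs ht
    have h1 := Set.mem_iInter.mp hs k
    have h2 := Set.mem_iInter.mp ht k
    cases hsk : s k <;> cases htk : t k
    · exact hk (by rw [hsk, htk])
    · rw [hsk] at h1; rw [htk] at h2
      simp only [hsets, if_true, if_false, Set.mem_preimage, Set.mem_Ioi, Set.mem_Iio,
        Bool.false_eq_true] at h1 h2
      exact absurd h2 (not_lt.mpr h1.le)
    · rw [hsk] at h1; rw [htk] at h2
      simp only [hsets, if_true, if_false, Set.mem_preimage, Set.mem_Ioi, Set.mem_Iio,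
        Bool.false_eq_true] at h1 h2
      exact absurd h1 (not_lt.mpr h2.le)
    · exact hk (by rw [hsk, htk])
  obtain ⟨e, rfl⟩ : ∃ e, d = e + 1 := ⟨d - 1, by omega⟩
  have he1 : 1 ≤ e := by omega
  have hpow : (1 / 2 : ℝ≥0∞) ^ e = 1 / 2 ^ e := by
    rw [one_div, one_div, ENNReal.inv_pow]
  constructor
  · -- p₀ part
    have hsub : (⋂ k, β k ⁻¹' sets true) ∪ (⋂ k, β k ⁻¹' sets false)
        ⊆ {ω | numInternalEquilibria (e + 1) (fun k => β k ω) = 0} := by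
      rintro ω (hω | hω) <;> rw [Set.mem_setOf_eq, numEq_eq]
      · refine NN_pos _ _ (by omega) fun k => ?_
        have h1 := Set.mem_iInter.mp hω k
        simp only [hsets, if_true, Set.mem_preimage, Set.mem_Ioi] at h1
        exact mul_pos h1 (hchoose k)
      · refine NN_pos' _ _ (by omega) fun k => ?_
        have h1 := Set.mem_iInter.mp hω k
        simp only [hsets, if_false, Set.mem_preimage, Set.mem_Iio, Bool.false_eq_true] at h1
        exact mul_neg_of_neg_of_pos h1 (hchoose k)
    refine le_trans ?_ (measure_mono hsub)
    rw [measure_union (hdisj _ _ (Function.ne_iff.mpr ⟨⟨0, by omega⟩, by simp⟩)) (hEm _),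
      hE, hE]
    have : (1 / 2 : ℝ≥0∞) ^ (e + 1) + (1 / 2 : ℝ≥0∞) ^ (e + 1) = (1 / 2 : ℝ≥0∞) ^ e := by
      rw [pow_succ, ← mul_add, ENNReal.add_halves, mul_one]
    rw [this, hpow]
    simp
  · -- p₁ part
    set T : Finset (ℕ × Bool) := (Finset.Ico 1 (e + 1)) ×ˢ (Finset.univ : Finset Bool)
      with hT
    set pat : ℕ × Bool → (Fin (e + 1) → Bool) :=
      fun p k => if (k : ℕ) < p.1 then !p.2 else p.2 with hpat
    have hTmem : ∀ p ∈ T, 1 ≤ p.1 ∧ p.1 < e + 1 := by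
      intro p hp
      rw [hT, Finset.mem_product, Finset.mem_Ico] at hp
      exact ⟨hp.1.1, hp.1.2⟩
    have hpatinj : ∀ p ∈ T, ∀ q ∈ T, p ≠ q → pat p ≠ pat q := by
      intro p hp q hq hpq hcontra
      obtain ⟨hp1, hp2⟩ := hTmem p hp
      obtain ⟨hq1, hq2⟩ := hTmem q hq
      by_cases hb : p.2 = q.2
      · have hj : p.1 ≠ q.1 := fun h => hpq (Prod.ext h hb)
        rcases Nat.lt_or_ge p.1 q.1 with h | h
        · have := congrFun hcontra ⟨p.1, by omega⟩
          simp only [hpat, Fin.val_mk] at this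
          rw [if_neg (lt_irrefl p.1), if_pos h] at this
          rw [hb] at this
          exact (Bool.not_ne_self q.2) this.symm
        · have h' : q.1 < p.1 := by omega
          have := congrFun hcontra ⟨q.1, by omega⟩
          simp only [hpat, Fin.val_mk] at this
          rw [if_pos h', if_neg (lt_irrefl q.1)] at this
          rw [hb] at this
          exact (Bool.not_ne_self q.2) this
      · have := congrFun hcontra ⟨e, by omega⟩
        simp only [hpat, Fin.val_mk] at this
        rw [if_neg (by omega : ¬ (e < p.1)), if_neg (by omega : ¬ (e < q.1))] at this
        exact hb this
    have hdisj' : (T : Set (ℕ × Bool)).PairwiseDisjoint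
        (fun p => ⋂ k, β k ⁻¹' sets (pat p k)) := by
      intro p hp q hq hpq
      exact hdisj _ _ (hpatinj p (by exact_mod_cast hp) q (by exact_mod_cast hq) hpq)
    have hsum := measure_biUnion_finset (μ := μ) hdisj' (fun p _ => hEm (pat p))
    have hsub : (⋃ p ∈ T, ⋂ k, β k ⁻¹' sets (pat p k))
        ⊆ {ω | numInternalEquilibria (e + 1) (fun k => β k ω) = 1} := by
      intro ω hω
      rw [Set.mem_iUnion₂] at hω
      obtain ⟨p, hp, hω⟩ := hω
      obtain ⟨hp1, hp2⟩ := hTmem p hp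
      rw [Set.mem_setOf_eq, numEq_eq]
      have hval : ∀ k : Fin (e + 1), β k ω ∈ sets (pat p k) := fun k => Set.mem_iInter.mp hω k
      cases hb : p.2
      · -- p.2 = false : positive below p.1, negative above
        refine NN_one' _ _ (by omega) p.1 hp1 hp2 (fun k hk => ?_) (fun k hk => ?_)
        · have := hval k
          rw [hpat] at this
          simp only [if_pos hk, hb, Bool.not_false, hsets, if_true,
            Set.mem_preimage, Set.mem_Ioi] at this
          exact mul_pos this (hchoose k)
        · have := hval k
          rw [hpat] at this
          simp only [if_neg (not_lt.mpr hk), hb, hsets, if_false,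
            Set.mem_preimage, Set.mem_Iio, Bool.false_eq_true] at this
          exact mul_neg_of_neg_of_pos this (hchoose k)
      · -- p.2 = true : negative below p.1, positive above
        refine NN_one _ _ (by omega) p.1 hp1 hp2 (fun k hk => ?_) (fun k hk => ?_)
        · have := hval k
          rw [hpat] at this
          simp only [if_pos hk, hb, Bool.not_true, hsets, if_false,
            Set.mem_preimage, Set.mem_Iio, Bool.false_eq_true] at this
          exact mul_neg_of_neg_of_pos this (hchoose k)
        · have := hval k
          rw [hpat] at this
          simp only [if_neg (not_lt.mpr hk), hb, hsets, if_true,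
            Set.mem_preimage, Set.mem_Ioi] at this
          exact mul_pos this (hchoose k)
    refine le_trans ?_ (measure_mono hsub)
    rw [hsum]
    have hcardT : T.card = e * 2 := by
      rw [hT, Finset.card_product, Nat.card_Ico, Finset.card_univ, Fintype.card_bool]
      omega
    rw [Finset.sum_congr rfl (fun p _ => hE (pat p)), Finset.sum_const, hcardT,
      nsmul_eq_mul]
    have h2 : (2 : ℝ≥0∞) * (1 / 2) = 1 := by
      rw [one_div, ENNReal.mul_inv_cancel two_ne_zero ENNReal.ofNat_ne_top]
    have hr : ((e * 2 : ℕ) : ℝ≥0∞) * (1 / 2) ^ (e + 1) = (e : ℝ≥0∞) * (1 / 2) ^ e := by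
      push_cast
      rw [pow_succ]
      calc (e : ℝ≥0∞) * 2 * ((1 / 2) ^ e * (1 / 2))
          = (e : ℝ≥0∞) * (2 * (1 / 2)) * (1 / 2) ^ e := by ring
        _ = (e : ℝ≥0∞) * (1 / 2) ^ e := by rw [h2, mul_one]
    have hl : ((e + 1 - 1 : ℕ) : ℝ≥0∞) / 2 ^ (e + 1 - 1) = (e : ℝ≥0∞) * (1 / 2) ^ e := by
      simp only [Nat.add_sub_cancel]
      rw [hpow, one_div, div_eq_mul_inv]
    rw [hl, hr]
end

section
/- Let n ≥ 1, α ∈ [0,1], and let a_0, …, a_n be independent real-valued random variables with P(a_i > 0) = α and P(a_i < 0) = 1 − α for every i. Then the probability p_{n,n} that the sequence (a_0, …, a_n) has the maximal number n of sign changes equals (α(1−α))^{n/2} if n is even, and 2·(α(1−α))^{(n+1)/2} if n is odd. -/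
open MeasureTheory ProbabilityTheory
open scoped ENNReal

/-- Number of sign changes of the sequence `a 0, a 1, …, a N` (there are `N`
consecutive pairs): the number of indices `0 ≤ i ≤ N - 1` with `a i * a (i+1) < 0`. -/
noncomputable def signChanges {Ω : Type*} (a : ℕ → Ω → ℝ) (N : ℕ) (ω : Ω) : ℕ :=
  ((Finset.range N).filter fun i => a i ω * a (i + 1) ω < 0).card

/-- Alternating signs propagate. -/
lemma alt_signs (n : ℕ) (b : ℕ → ℝ) (hb : ∀ i < n, b i * b (i + 1) < 0) (h0 : 0 < b 0) :
    ∀ i ≤ n, if Even i then 0 < b i else b i < 0 := by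
  intro i
  induction i with
  | zero => intro _; simpa using h0
  | succ i ih =>
    intro hin
    have hi : i ≤ n := Nat.le_of_succ_le hin
    have h := ih hi
    have hm := hb i (Nat.lt_of_succ_le hin)
    rcases mul_neg_iff.mp hm with ⟨h1, h2⟩ | ⟨h1, h2⟩
    · have he : Even i := by
        by_contra hc
        rw [if_neg hc] at h
        linarith
      rw [if_neg (by simpa [Nat.even_add_one] using he)]
      exact h2
    · have he : ¬ Even i := by
        by_contra hc
        rw [if_pos hc] at h
        linarith
      rw [if_pos (by simpa [Nat.even_add_one] using he)]
      exact h2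

lemma prod_alt (x y : ℝ≥0∞) (m : ℕ) :
    ∏ i ∈ Finset.range m, (if Even i then x else y) = x ^ ((m + 1) / 2) * y ^ (m / 2) := by
  induction m with
  | zero => simp
  | succ m ih =>
    rw [Finset.prod_range_succ, ih]
    rcases Nat.even_or_odd m with he | ho
    · have hm := Nat.even_iff.mp he
      have h1 : (m + 1 + 1) / 2 = (m + 1) / 2 + 1 := by omega
      have h2 : (m + 1) / 2 = m / 2 := by omega
      rw [if_pos he, h1, h2, pow_succ]
      ring
    · have hm := Nat.odd_iff.mp ho
      have h1 : (m + 1 + 1) / 2 = (m + 1) / 2 := by omega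
      have h2 : (m + 1) / 2 = m / 2 + 1 := by omega
      rw [if_neg (Nat.not_even_iff_odd.mpr ho), h1, h2, pow_succ]
      ring

/-- If `a 0, …, a n` are independent real random variables with `P(a i > 0) = α`
and `P(a i < 0) = 1 − α`, then the probability `p_{n,n}` that `(a 0, …, a n)` has
the maximal number `n` of sign changes equals `(α(1−α))^{n/2}` if `n` is even and
`2·(α(1−α))^{(n+1)/2}` if `n` is odd. -/
theorem prob_max_signChanges
    {Ω : Type*} [MeasurableSpace Ω] (μ : Measure Ω) [IsProbabilityMeasure μ]
    (n : ℕ) (hn : 1 ≤ n) (α : ℝ) (hα : α ∈ Set.Icc (0 : ℝ) 1) (a : ℕ → Ω → ℝ)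
    (hmeas : ∀ i, Measurable (a i))
    (hindep : iIndepFun
      (fun i : Fin (n + 1) => a i) μ)
    (hpos : ∀ i ≤ n, μ {ω | 0 < a i ω} = ENNReal.ofReal α)
    (hneg : ∀ i ≤ n, μ {ω | a i ω < 0} = ENNReal.ofReal (1 - α)) :
    μ {ω | signChanges a n ω = n} =
      if Even n then ENNReal.ofReal ((α * (1 - α)) ^ (n / 2))
      else ENNReal.ofReal (2 * (α * (1 - α)) ^ ((n + 1) / 2)) := by
  obtain ⟨hα0, hα1⟩ := hα
  have hs0 : (0 : ℝ) ≤ 1 - α := by linarith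
  set A : Fin (n + 1) → Set Ω :=
    fun i => if Even (i : ℕ) then {ω | 0 < a i ω} else {ω | a i ω < 0} with hA
  set B : Fin (n + 1) → Set Ω :=
    fun i => if Even (i : ℕ) then {ω | a i ω < 0} else {ω | 0 < a i ω} with hB
  -- event decomposition
  have hset : {ω | signChanges a n ω = n} = (⋂ i, A i) ∪ (⋂ i, B i) := by
    ext ω
    simp only [Set.mem_setOf_eq, Set.mem_union, Set.mem_iInter]
    constructor
    · intro h
      have hall : ∀ i < n, a i ω * a (i + 1) ω < 0 := by
        have hfe : ((Finset.range n).filter fun i => a i ω * a (i + 1) ω < 0)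
            = Finset.range n := by
          apply Finset.eq_of_subset_of_card_le (Finset.filter_subset _ _)
          rw [Finset.card_range]
          exact le_of_eq h.symm
        intro i hi
        have := Finset.mem_filter.mp (hfe ▸ Finset.mem_range.mpr hi)
        exact this.2
      have h01 := hall 0 hn
      have h0ne : a 0 ω ≠ 0 := by
        intro hz
        rw [hz, zero_mul] at h01
        exact lt_irrefl _ h01
      rcases h0ne.lt_or_gt with h0 | h0
      · right
        intro i
        have := alt_signs n (fun j => -(a j ω))
          (fun j hj => by simpa [neg_mul_neg] using hall j hj) (by simpa using h0)
          (i : ℕ) (Fin.is_le i)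
        simp only [hB]
        split_ifs with he
        · rw [if_pos he] at this; simpa using this
        · rw [if_neg he] at this; simpa using this
      · left
        intro i
        have := alt_signs n (fun j => a j ω) hall h0 (i : ℕ) (Fin.is_le i)
        simp only [hA]
        split_ifs with he
        · rw [if_pos he] at this; exact this
        · rw [if_neg he] at this; exact this
    · intro h
      have hall : ∀ i < n, a i ω * a (i + 1) ω < 0 := by
        intro i hi
        have hi1 : i < n + 1 := by omega
        have hi2 : i + 1 < n + 1 := by omega
        rcases h with h | h
        · have hA1 := h ⟨i, hi1⟩
          have hA2 := h ⟨i + 1, hi2⟩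
          simp only [hA] at hA1 hA2
          rcases Nat.even_or_odd i with he | ho
          · rw [if_pos he] at hA1
            rw [if_neg (by simpa [Nat.even_add_one] using he)] at hA2
            exact mul_neg_of_pos_of_neg hA1 hA2
          · have he := Nat.not_even_iff_odd.mpr ho
            rw [if_neg he] at hA1
            rw [if_pos (by simpa [Nat.even_add_one] using he)] at hA2
            exact mul_neg_of_neg_of_pos hA1 hA2
        · have hA1 := h ⟨i, hi1⟩
          have hA2 := h ⟨i + 1, hi2⟩
          simp only [hB] at hA1 hA2
          rcases Nat.even_or_odd i with he | ho
          · rw [if_pos he] at hA1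
            rw [if_neg (by simpa [Nat.even_add_one] using he)] at hA2
            exact mul_neg_of_neg_of_pos hA1 hA2
          · have he := Nat.not_even_iff_odd.mpr ho
            rw [if_neg he] at hA1
            rw [if_pos (by simpa [Nat.even_add_one] using he)] at hA2
            exact mul_neg_of_pos_of_neg hA1 hA2
      unfold signChanges
      have : ((Finset.range n).filter fun i => a i ω * a (i + 1) ω < 0)
          = Finset.range n := by
        apply Finset.filter_true_of_mem
        intro i hi
        exact hall i (Finset.mem_range.mp hi)
      rw [this, Finset.card_range]
  -- measurability of the B-intersection
  have hBmeas : MeasurableSet (⋂ i, B i) := by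
    apply MeasurableSet.iInter
    intro i
    simp only [hB]
    split_ifs
    · exact measurableSet_lt (hmeas i) measurable_const
    · exact measurableSet_lt measurable_const (hmeas i)
  -- disjointness
  have hdisj : Disjoint (⋂ i, A i) (⋂ i, B i) := by
    rw [Set.disjoint_left]
    intro ω hωA hωB
    have h1 := Set.mem_iInter.mp hωA 0
    have h2 := Set.mem_iInter.mp hωB 0
    simp only [hA, hB] at h1 h2
    rw [if_pos (by simp)] at h1 h2
    simp only [Set.mem_setOf_eq] at h1 h2
    exact absurd h1 (not_lt.mpr (le_of_lt h2))
  -- measure via independence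
  have hmA : μ (⋂ i, A i) = ∏ i : Fin (n + 1), μ (A i) := by
    refine hindep.meas_iInter fun i => ?_
    simp only [hA]
    split_ifs
    · exact ⟨Set.Ioi 0, measurableSet_Ioi, rfl⟩
    · exact ⟨Set.Iio 0, measurableSet_Iio, rfl⟩
  have hmB : μ (⋂ i, B i) = ∏ i : Fin (n + 1), μ (B i) := by
    refine hindep.meas_iInter fun i => ?_
    simp only [hB]
    split_ifs
    · exact ⟨Set.Iio 0, measurableSet_Iio, rfl⟩
    · exact ⟨Set.Ioi 0, measurableSet_Ioi, rfl⟩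
  set x : ℝ≥0∞ := ENNReal.ofReal α with hx
  set y : ℝ≥0∞ := ENNReal.ofReal (1 - α) with hy
  have hAval : ∏ i : Fin (n + 1), μ (A i) = x ^ ((n + 2) / 2) * y ^ ((n + 1) / 2) := by
    have : ∀ i : Fin (n + 1), μ (A i) = if Even (i : ℕ) then x else y := by
      intro i
      simp only [hA]
      split_ifs
      · exact hpos i (Fin.is_le i)
      · exact hneg i (Fin.is_le i)
    rw [Finset.prod_congr rfl fun i _ => this i, Fin.prod_univ_eq_prod_range
      (fun i => if Even i then x else y) (n + 1), prod_alt]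
  have hBval : ∏ i : Fin (n + 1), μ (B i) = y ^ ((n + 2) / 2) * x ^ ((n + 1) / 2) := by
    have : ∀ i : Fin (n + 1), μ (B i) = if Even (i : ℕ) then y else x := by
      intro i
      simp only [hB]
      split_ifs
      · exact hneg i (Fin.is_le i)
      · exact hpos i (Fin.is_le i)
    rw [Finset.prod_congr rfl fun i _ => this i, Fin.prod_univ_eq_prod_range
      (fun i => if Even i then y else x) (n + 1), prod_alt]
  rw [hset, measure_union hdisj hBmeas, hmA, hmB, hAval, hBval]
  have hxk : ∀ k, x ^ k = ENNReal.ofReal (α ^ k) := fun k =>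
    (ENNReal.ofReal_pow hα0 k).symm
  have hyk : ∀ k, y ^ k = ENNReal.ofReal ((1 - α) ^ k) := fun k =>
    (ENNReal.ofReal_pow hs0 k).symm
  rcases Nat.even_or_odd n with he | ho
  · obtain ⟨m, hm⟩ := he
    have hn2 : (n + 2) / 2 = m + 1 := by omega
    have hn1 : (n + 1) / 2 = m := by omega
    have hnd : n / 2 = m := by omega
    rw [if_pos (by exact ⟨m, hm⟩), hn2, hn1, hnd, hxk, hxk, hyk, hyk,
      ← ENNReal.ofReal_mul (by positivity), ← ENNReal.ofReal_mul (by positivity),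
      ← ENNReal.ofReal_add (by positivity) (by positivity)]
    congr 1
    rw [mul_pow, pow_succ, pow_succ]
    ring
  · obtain ⟨m, hm⟩ := ho
    have hn2 : (n + 2) / 2 = m + 1 := by omega
    have hn1 : (n + 1) / 2 = m + 1 := by omega
    rw [if_neg (Nat.not_even_iff_odd.mpr ⟨m, hm⟩), hn2, hn1, hxk, hyk,
      ← ENNReal.ofReal_mul (by positivity), ← ENNReal.ofReal_mul (by positivity),
      ← ENNReal.ofReal_add (by positivity) (by positivity)]
    congr 1
    rw [mul_pow]
    ring
end

section
/- Let n ≥ 1, α ∈ (0,1), and let a_0, …, a_n be independent real-valued random variables with P(a_i > 0) = α and P(a_i < 0) = 1 − α for every i. Then the probability p_{n−1,n} that (a_0, …, a_n) has exactly n−1 sign changes equals n·(α(1−α))^{n/2} if n is even, and (α(1−α))^{(n+1)/2}·[ ((n+1)/2)·( α/(1−α) + (1−α)/α ) + (n−1) ] if n is odd. -/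
open MeasureTheory ProbabilityTheory

private lemma aux_prod_ite_odd (x y : ℝ) (n : ℕ) :
    (∏ k ∈ Finset.range n, (if Odd k then x else y)) = x ^ (n / 2) * y ^ ((n + 1) / 2) := by
  induction n with
  | zero => simp
  | succ n ih =>
    rw [Finset.prod_range_succ, ih]
    rcases Nat.even_or_odd n with h | h
    · rw [Nat.even_iff] at h
      rw [if_neg (by rw [Nat.odd_iff]; omega)]
      have h1 : (n + 1) / 2 = n / 2 := by omega
      have h2 : (n + 1 + 1) / 2 = (n + 1) / 2 + 1 := by omega
      rw [h1, h2, h1, pow_succ]; ring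
    · rw [Nat.odd_iff] at h
      rw [if_pos (by rw [Nat.odd_iff]; omega)]
      have h1 : (n + 1) / 2 = n / 2 + 1 := by omega
      have h2 : (n + 1 + 1) / 2 = (n + 1) / 2 := by omega
      rw [h2, h1, pow_succ]; ring

private lemma aux_sum_ite_odd (x y : ℝ) (n : ℕ) :
    (∑ k ∈ Finset.range n, (if Odd k then x else y)) =
      ((n / 2 : ℕ) : ℝ) * x + (((n + 1) / 2 : ℕ) : ℝ) * y := by
  induction n with
  | zero => simp
  | succ n ih =>
    rw [Finset.sum_range_succ, ih]
    rcases Nat.even_or_odd n with h | h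
    · rw [Nat.even_iff] at h
      rw [if_neg (by rw [Nat.odd_iff]; omega)]
      have h1 : (n + 1) / 2 = n / 2 := by omega
      have h2 : (n + 1 + 1) / 2 = (n + 1) / 2 + 1 := by omega
      rw [h1, h2, h1]; push_cast; ring
    · rw [Nat.odd_iff] at h
      rw [if_pos (by rw [Nat.odd_iff]; omega)]
      have h1 : (n + 1) / 2 = n / 2 + 1 := by omega
      have h2 : (n + 1 + 1) / 2 = (n + 1) / 2 := by omega
      rw [h2, h1]; push_cast; ring

private def patF (j i : ℕ) : Bool := decide (Odd (if i ≤ j then i else i - 1))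

private lemma patF_zero (j : ℕ) : patF j 0 = false := by
  simp [patF, Nat.odd_iff]

private lemma patF_succ_eq_iff (j i : ℕ) : (patF j (i + 1) = patF j i) ↔ i = j := by
  simp only [patF, decide_eq_decide, Nat.odd_iff]
  split_ifs with h1 h2 h2 <;> omega

private lemma pattern_unique (n j : ℕ) (s : ℕ → Bool)
    (h : ∀ i < n, (s (i + 1) = s i ↔ i = j)) :
    ∀ i ≤ n, s i = xor (patF j i) (s 0) := by
  intro i
  induction i with
  | zero => intro _; rw [patF_zero]; simp
  | succ i ih =>
    intro hi
    have hp := ih (by omega)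
    by_cases hij : i = j
    · rw [(h i (by omega)).2 hij, hp, (patF_succ_eq_iff j i).2 hij]
    · have h1 : s (i + 1) ≠ s i := fun e => hij ((h i (by omega)).1 e)
      have h2 : patF j (i + 1) ≠ patF j i := fun e => hij ((patF_succ_eq_iff j i).1 e)
      have e1 : s (i + 1) = !(s i) := by
        revert h1; cases s (i + 1) <;> cases s i <;> simp
      have e2 : patF j (i + 1) = !(patF j i) := by
        revert h2; cases patF j (i + 1) <;> cases patF j i <;> simp
      rw [e1, e2, hp]
      cases patF j i <;> cases s 0 <;> rfl

private lemma prod_shift (g : ℕ → ℝ) (n j : ℕ) (hj : j < n) :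
    (∏ i ∈ Finset.range (n + 1), g (if i ≤ j then i else i - 1)) =
      g j * ∏ k ∈ Finset.range n, g k := by
  rw [← Finset.prod_range_mul_prod_Ico _ (show j + 1 ≤ n + 1 by omega)]
  have h1 : (∏ i ∈ Finset.range (j + 1), g (if i ≤ j then i else i - 1)) =
      ∏ i ∈ Finset.range (j + 1), g i := by
    refine Finset.prod_congr rfl fun i hi => ?_
    rw [if_pos (Nat.lt_succ_iff.1 (Finset.mem_range.1 hi))]
  have h2 : (∏ i ∈ Finset.Ico (j + 1) (n + 1), g (if i ≤ j then i else i - 1)) =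
      ∏ i ∈ Finset.Ico j n, g i := by
    rw [Finset.prod_Ico_eq_prod_range, Finset.prod_Ico_eq_prod_range]
    have hd : n + 1 - (j + 1) = n - j := by omega
    rw [hd]
    refine Finset.prod_congr rfl fun i _ => ?_
    rw [if_neg (by omega)]
    congr 1; omega
  rw [h1, h2, Finset.prod_range_succ, ← Finset.prod_range_mul_prod_Ico g hj.le]
  ring

private def sgnSet {Ω : Type*} (a : ℕ → Ω → ℝ) (b : Bool) (i : ℕ) : Set Ω :=
  match b with
  | true => {ω | 0 < a i ω}
  | false => {ω | a i ω < 0}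

/-- If `a 0, …, a n` are independent real random variables with `P(a i > 0) = α`
and `P(a i < 0) = 1 − α`, `α ∈ (0,1)`, then the probability `p_{n−1,n}` that
`(a 0, …, a n)` has exactly `n − 1` sign changes equals `n·(α(1−α))^{n/2}` if `n`
is even, and `(α(1−α))^{(n+1)/2}·[ ((n+1)/2)·(α/(1−α) + (1−α)/α) + (n−1) ]` if `n`
is odd. -/
theorem prob_signChanges_n_sub_one
    {Ω : Type*} [MeasurableSpace Ω] (μ : Measure Ω) [IsProbabilityMeasure μ]
    (n : ℕ) (hn : 1 ≤ n) (α : ℝ) (hα : α ∈ Set.Ioo (0 : ℝ) 1) (a : ℕ → Ω → ℝ)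
    (hmeas : ∀ i, Measurable (a i))
    (hindep : iIndepFun
      (fun i : Fin (n + 1) => a i) μ)
    (hpos : ∀ i ≤ n, μ {ω | 0 < a i ω} = ENNReal.ofReal α)
    (hneg : ∀ i ≤ n, μ {ω | a i ω < 0} = ENNReal.ofReal (1 - α)) :
    μ {ω | signChanges a n ω = n - 1} =
      if Even n then ENNReal.ofReal ((n : ℝ) * (α * (1 - α)) ^ (n / 2))
      else ENNReal.ofReal ((α * (1 - α)) ^ ((n + 1) / 2) *
        (((n : ℝ) + 1) / 2 * (α / (1 - α) + (1 - α) / α) + ((n : ℝ) - 1))) := by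
  classical
  obtain ⟨hα0, hα1⟩ := hα
  have hβ0 : (0 : ℝ) < 1 - α := by linarith
  -- basic real weights
  set q : Bool → ℝ := fun b => if b then α else 1 - α with hqdef
  have hq_nonneg : ∀ b, 0 ≤ q b := by
    intro b; cases b <;> simp [hqdef] <;> linarith
  -- the sign sets
  have hTmeas : ∀ b i, MeasurableSet (sgnSet a b i) := by
    intro b i; cases b
    · exact measurableSet_lt (hmeas i) measurable_const
    · exact measurableSet_lt measurable_const (hmeas i)
  have hμT : ∀ b, ∀ i ≤ n, μ (sgnSet a b i) = ENNReal.ofReal (q b) := by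
    intro b i hi; cases b
    · simpa [sgnSet, hqdef] using hneg i hi
    · simpa [sgnSet, hqdef] using hpos i hi
  -- the elementary events
  set E : ℕ → Bool → Set Ω := fun j b => ⋂ i : Fin (n + 1), sgnSet a (xor (patF j i) b) i
    with hEdef
  have hEmeas : ∀ j b, MeasurableSet (E j b) :=
    fun j b => MeasurableSet.iInter fun i => hTmeas _ _
  -- measure of elementary events via independence
  have hμE : ∀ j b, μ (E j b) =
      ENNReal.ofReal (∏ i ∈ Finset.range (n + 1), q (xor (patF j i) b)) := by
    intro j b
    have h1 : μ (E j b) = ∏ i : Fin (n + 1), μ (sgnSet a (xor (patF j (i : ℕ)) b) (i : ℕ)) := by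
      refine hindep.meas_iInter fun i => ?_
      cases xor (patF j (i : ℕ)) b
      · exact ⟨Set.Iio 0, measurableSet_Iio, rfl⟩
      · exact ⟨Set.Ioi 0, measurableSet_Ioi, rfl⟩
    rw [h1,
      Finset.prod_congr rfl fun (i : Fin (n + 1)) _ =>
        hμT (xor (patF j (i : ℕ)) b) (i : ℕ) (Nat.lt_succ_iff.1 i.isLt),
      ← ENNReal.ofReal_prod_of_nonneg fun i _ => hq_nonneg _]
    congr 1
    exact Fin.prod_univ_eq_prod_range (fun i => q (xor (patF j i) b)) (n + 1)
  -- zero values have probability zero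
  have hzero : ∀ i ≤ n, μ {ω | a i ω = 0} = 0 := by
    intro i hi
    have hd : Disjoint {ω | 0 < a i ω} {ω | a i ω < 0} := by
      rw [Set.disjoint_left]
      intro ω h1 h2
      exact absurd (Set.mem_setOf_eq ▸ h1) (not_lt.2 (le_of_lt h2))
    have hu : μ ({ω | 0 < a i ω} ∪ {ω | a i ω < 0}) = 1 := by
      rw [measure_union hd (measurableSet_lt (hmeas i) measurable_const), hpos i hi, hneg i hi,
        ← ENNReal.ofReal_add hα0.le hβ0.le]
      norm_num
    have hc : {ω | a i ω = 0} = ({ω | 0 < a i ω} ∪ {ω | a i ω < 0})ᶜ := by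
      ext ω
      simp only [Set.mem_compl_iff, Set.mem_union, Set.mem_setOf_eq, not_or, not_lt]
      constructor
      · intro h; exact ⟨h.le, h.ge⟩
      · intro ⟨h1, h2⟩; exact le_antisymm h1 h2
    rw [hc, measure_compl
      ((measurableSet_lt measurable_const (hmeas i)).union
        (measurableSet_lt (hmeas i) measurable_const))
      (measure_ne_top μ _), hu, measure_univ, tsub_self]
  have hae : ∀ᵐ ω ∂μ, ∀ i ≤ n, a i ω ≠ 0 := by
    rw [MeasureTheory.ae_iff]
    refine measure_mono_null (fun ω hω => ?_)
      (measure_iUnion_null (s := fun i : Fin (n + 1) => {ω | a (i : ℕ) ω = 0})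
        fun i => hzero (i : ℕ) (Nat.lt_succ_iff.1 i.isLt))
    simp only [Set.mem_setOf_eq, not_forall] at hω
    obtain ⟨i, hi, h0⟩ := hω
    exact Set.mem_iUnion.2 ⟨⟨i, by omega⟩, by simpa using h0⟩
  -- the pointwise combinatorial identification
  have key : ∀ ω, (∀ i ≤ n, a i ω ≠ 0) →
      (signChanges a n ω = n - 1 ↔ ∃ p : Fin n × Bool, ω ∈ E (p.1 : ℕ) p.2) := by
    intro ω hnz
    set s : ℕ → Bool := fun i => decide (0 < a i ω) with hsdef
    have hst : ∀ i, s i = true ↔ 0 < a i ω := fun i => by simp [hsdef]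
    have hsf : ∀ i ≤ n, (s i = false ↔ a i ω < 0) := by
      intro i hi
      rw [hsdef]
      simp only [decide_eq_false_iff_not, not_lt]
      exact ⟨fun h => lt_of_le_of_ne h (hnz i hi), fun h => h.le⟩
    have hmul : ∀ i < n, (a i ω * a (i + 1) ω < 0 ↔ ¬ (s (i + 1) = s i)) := by
      intro i hi
      rcases (hnz i (by omega)).lt_or_gt with h | h <;>
        rcases (hnz (i + 1) (by omega)).lt_or_gt with h' | h'
      · have e1 : s i = false := (hsf i (by omega)).2 h
        have e2 : s (i + 1) = false := (hsf _ (by omega)).2 h'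
        have hp : ¬ (a i ω * a (i + 1) ω < 0) := not_lt.2 (mul_pos_of_neg_of_neg h h').le
        simp [e1, e2, hp]
      · have e1 : s i = false := (hsf i (by omega)).2 h
        have e2 : s (i + 1) = true := (hst _).2 h'
        have hp : a i ω * a (i + 1) ω < 0 := mul_neg_of_neg_of_pos h h'
        simp [e1, e2, hp]
      · have e1 : s i = true := (hst _).2 h
        have e2 : s (i + 1) = false := (hsf _ (by omega)).2 h'
        have hp : a i ω * a (i + 1) ω < 0 := mul_neg_of_pos_of_neg h h'
        simp [e1, e2, hp]
      · have e1 : s i = true := (hst _).2 h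
        have e2 : s (i + 1) = true := (hst _).2 h'
        have hp : ¬ (a i ω * a (i + 1) ω < 0) := not_lt.2 (mul_pos h h').le
        simp [e1, e2, hp]
    constructor
    · intro hcount
      simp only [signChanges] at hcount
      have hfe : (Finset.range n).filter (fun i => a i ω * a (i + 1) ω < 0)
          = (Finset.range n).filter (fun i => ¬ (s (i + 1) = s i)) :=
        Finset.filter_congr fun i hi => hmul i (Finset.mem_range.1 hi)
      have hcards := Finset.card_filter_add_card_filter_not
        (s := Finset.range n) (p := fun i => s (i + 1) = s i)
      rw [Finset.card_range] at hcards
      have h2 : ((Finset.range n).filter (fun i => ¬ (s (i + 1) = s i))).card = n - 1 := by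
        rw [← hfe]; exact hcount
      have h1 : ((Finset.range n).filter (fun i => s (i + 1) = s i)).card = 1 := by omega
      obtain ⟨j, hj⟩ := Finset.card_eq_one.1 h1
      have hjmem : j ∈ (Finset.range n).filter (fun i => s (i + 1) = s i) :=
        hj ▸ Finset.mem_singleton_self j
      have hjn : j < n := Finset.mem_range.1 (Finset.mem_filter.1 hjmem).1
      have hiff : ∀ i < n, (s (i + 1) = s i ↔ i = j) := by
        intro i hi
        constructor
        · intro he
          exact Finset.mem_singleton.1
            (hj ▸ Finset.mem_filter.2 ⟨Finset.mem_range.2 hi, he⟩)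
        · rintro rfl; exact (Finset.mem_filter.1 hjmem).2
      have hpat := pattern_unique n j s hiff
      refine ⟨⟨⟨j, hjn⟩, s 0⟩, ?_⟩
      refine Set.mem_iInter.2 fun i => ?_
      show ω ∈ sgnSet a (xor (patF j (i : ℕ)) (s 0)) (i : ℕ)
      rw [← hpat (i : ℕ) (Nat.lt_succ_iff.1 i.isLt)]
      cases hsi : s (i : ℕ)
      · exact (hsf _ (Nat.lt_succ_iff.1 i.isLt)).1 hsi
      · exact (hst _).1 hsi
    · rintro ⟨⟨j, b⟩, hmem⟩
      have hsig : ∀ i ≤ n, ω ∈ sgnSet a (xor (patF (j : ℕ) i) b) i := by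
        intro i hi
        exact Set.mem_iInter.1 hmem ⟨i, by omega⟩
      have e : ∀ k ≤ n, s k = xor (patF (j : ℕ) k) b := by
        intro k hk
        have hk2 := hsig k hk
        cases hx : xor (patF (j : ℕ) k) b
        · rw [hx] at hk2
          exact (hsf k hk).2 hk2
        · rw [hx] at hk2
          exact (hst k).2 hk2
      have hmul2 : ∀ i < n, (a i ω * a (i + 1) ω < 0 ↔ ¬ i = (j : ℕ)) := by
        intro i hi
        rw [hmul i hi, e (i + 1) (by omega), e i (by omega)]
        have hx : (xor (patF (j : ℕ) (i + 1)) b = xor (patF (j : ℕ) i) b)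
            ↔ (patF (j : ℕ) (i + 1) = patF (j : ℕ) i) := by
          cases b <;> simp
        rw [hx, patF_succ_eq_iff]
      have hfe : (Finset.range n).filter (fun i => a i ω * a (i + 1) ω < 0)
          = (Finset.range n).erase (j : ℕ) := by
        ext i
        simp only [Finset.mem_filter, Finset.mem_erase, Finset.mem_range]
        constructor
        · rintro ⟨hi, hlt⟩; exact ⟨(hmul2 i hi).1 hlt, hi⟩
        · rintro ⟨hne, hi⟩; exact ⟨hi, (hmul2 i hi).2 hne⟩
      simp only [signChanges]
      rw [hfe, Finset.card_erase_of_mem (Finset.mem_range.2 j.isLt), Finset.card_range]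
  -- pass to the disjoint union of elementary events
  have hU : μ {ω | signChanges a n ω = n - 1} =
      μ (⋃ p : Fin n × Bool, E (p.1 : ℕ) p.2) := by
    apply measure_congr
    rw [Filter.eventuallyEq_set]
    filter_upwards [hae] with ω hω
    rw [Set.mem_iUnion]
    exact key ω hω
  have cancel : ∀ x y c : Bool, (x ^^ c) = (y ^^ c) → x = y := by decide
  have hdisj : Pairwise (Function.onFun Disjoint
      fun p : Fin n × Bool => E (p.1 : ℕ) p.2) := by
    intro p q hpq
    rw [Function.onFun, Set.disjoint_left]
    intro ω hp hq
    apply hpq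
    have sig : ∀ r : Fin n × Bool, ω ∈ E (r.1 : ℕ) r.2 →
        ∀ i ≤ n, (xor (patF (r.1 : ℕ) i) r.2) = decide (0 < a i ω) := by
      intro r hr i hi
      have hm := Set.mem_iInter.1 hr ⟨i, by omega⟩
      cases hx : xor (patF (r.1 : ℕ) i) r.2
      · rw [hx] at hm
        exact (decide_eq_false (not_lt.2 (le_of_lt hm))).symm
      · rw [hx] at hm
        exact (decide_eq_true hm).symm
    have hsame : ∀ i ≤ n, xor (patF (p.1 : ℕ) i) p.2 = xor (patF (q.1 : ℕ) i) q.2 :=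
      fun i hi => by rw [sig p hp i hi, sig q hq i hi]
    have hb : p.2 = q.2 := by
      have h0 := hsame 0 (by omega)
      rwa [patF_zero, patF_zero, Bool.false_xor, Bool.false_xor] at h0
    have hj : (p.1 : ℕ) = (q.1 : ℕ) := by
      have h1 := hsame (p.1 : ℕ) (by omega)
      have h2 := hsame ((p.1 : ℕ) + 1) (by omega)
      rw [hb] at h1 h2
      have e1 := cancel _ _ _ h1
      have e2 := cancel _ _ _ h2
      have hpp : patF (p.1 : ℕ) ((p.1 : ℕ) + 1) = patF (p.1 : ℕ) (p.1 : ℕ) :=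
        (patF_succ_eq_iff _ _).2 rfl
      have hqq : patF (q.1 : ℕ) ((p.1 : ℕ) + 1) = patF (q.1 : ℕ) (p.1 : ℕ) := by
        rw [← e1, ← e2, hpp]
      exact (patF_succ_eq_iff _ _).1 hqq
    exact Prod.ext (Fin.ext hj) hb
  rw [hU, measure_iUnion hdisj fun p => hEmeas _ _, tsum_fintype]
  -- value of each elementary event
  have hterm : ∀ p : Fin n × Bool, μ (E (p.1 : ℕ) p.2) = ENNReal.ofReal
      ((fun k => q (xor (decide (Odd k)) p.2)) (p.1 : ℕ) *
        ∏ k ∈ Finset.range n, q (xor (decide (Odd k)) p.2)) := by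
    intro p
    rw [hμE]
    congr 1
    calc ∏ i ∈ Finset.range (n + 1), q (xor (patF (p.1 : ℕ) i) p.2)
        = ∏ i ∈ Finset.range (n + 1), (fun k => q (xor (decide (Odd k)) p.2))
            (if i ≤ (p.1 : ℕ) then i else i - 1) := rfl
      _ = _ := prod_shift (fun k => q (xor (decide (Odd k)) p.2)) n (p.1 : ℕ) p.1.isLt
  rw [Finset.sum_congr rfl fun p _ => hterm p]
  have hnn : ∀ p : Fin n × Bool, 0 ≤ (fun k => q (xor (decide (Odd k)) p.2)) (p.1 : ℕ) *
      ∏ k ∈ Finset.range n, q (xor (decide (Odd k)) p.2) :=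
    fun p => mul_nonneg (hq_nonneg _) (Finset.prod_nonneg fun _ _ => hq_nonneg _)
  rw [← ENNReal.ofReal_sum_of_nonneg fun p _ => hnn p]
  -- compute the real sum
  have hqe_false : ∀ k : ℕ, q (xor (decide (Odd k)) false) = if Odd k then α else 1 - α := by
    intro k; by_cases h : Odd k <;> simp [h, hqdef]
  have hqe_true : ∀ k : ℕ, q (xor (decide (Odd k)) true) = if Odd k then 1 - α else α := by
    intro k; by_cases h : Odd k <;> simp [h, hqdef]
  have hsum : (∑ p : Fin n × Bool, (fun k => q (xor (decide (Odd k)) p.2)) (p.1 : ℕ) *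
      ∏ k ∈ Finset.range n, q (xor (decide (Odd k)) p.2)) =
      (((n / 2 : ℕ) * (1 - α) + ((n + 1) / 2 : ℕ) * α) *
          ((1 - α) ^ (n / 2) * α ^ ((n + 1) / 2)) +
        ((n / 2 : ℕ) * α + ((n + 1) / 2 : ℕ) * (1 - α)) *
          (α ^ (n / 2) * (1 - α) ^ ((n + 1) / 2))) := by
    rw [Fintype.sum_prod_type_right]
    rw [Fintype.sum_bool]
    have hA : ∀ b : Bool, (∑ j : Fin n, (fun k => q (xor (decide (Odd k)) b)) ((j : ℕ)) *
        ∏ k ∈ Finset.range n, q (xor (decide (Odd k)) b)) =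
        (∑ j ∈ Finset.range n, q (xor (decide (Odd j)) b)) *
          ∏ k ∈ Finset.range n, q (xor (decide (Odd k)) b) := by
      intro b
      rw [← Finset.sum_mul]
      congr 1
      exact Fin.sum_univ_eq_sum_range (fun j => q (xor (decide (Odd j)) b)) n
    rw [hA true, hA false]
    have hps : ∀ (f g : ℕ → ℝ), (∀ k, f k = g k) →
        ((∑ j ∈ Finset.range n, f j) = ∑ j ∈ Finset.range n, g j) ∧
        ((∏ k ∈ Finset.range n, f k) = ∏ k ∈ Finset.range n, g k) :=
      fun f g h => ⟨Finset.sum_congr rfl fun k _ => h k, Finset.prod_congr rfl fun k _ => h k⟩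
    obtain ⟨hs1, hp1⟩ := hps _ _ hqe_true
    obtain ⟨hs2, hp2⟩ := hps _ _ hqe_false
    rw [hs1, hp1, hs2, hp2, aux_sum_ite_odd, aux_prod_ite_odd, aux_sum_ite_odd,
      aux_prod_ite_odd]
  rw [hsum]
  -- final arithmetic
  rcases Nat.even_or_odd n with he | ho
  · rw [if_pos he]
    obtain ⟨m, hm⟩ := he
    congr 1
    have d1 : n / 2 = m := by omega
    have d2 : (n + 1) / 2 = m := by omega
    rw [d1, d2, hm]
    push_cast
    rw [mul_pow]
    ring
  · rw [if_neg (by simpa [Nat.even_iff, Nat.odd_iff] using ho)]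
    obtain ⟨m, hm⟩ := ho
    congr 1
    have d1 : n / 2 = m := by omega
    have d2 : (n + 1) / 2 = m + 1 := by omega
    rw [d1, d2, hm]
    push_cast
    rw [mul_pow]
    field_simp
    ring
end

section
/- Let α ∈ (0,1), n ≥ 1, and let a_0, …, a_n be independent real-valued random variables with P(a_i > 0) = α and P(a_i < 0) = 1 − α for every i. For every integer k ≥ 0, the conditional probabilities satisfy the recursions u_{k,n} = α·u_{k,n−1} + (1−α)·v_{k−1,n−1} and v_{k,n} = α·u_{k−1,n−1} + (1−α)·v_{k,n−1}. -/
open MeasureTheory ProbabilityTheory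

/-- `u k N`: the conditional probability, given `a N > 0`, that `(a 0, …, a N)`
has exactly `k` sign changes. -/
noncomputable def condProbPos {Ω : Type*} [MeasurableSpace Ω] (μ : Measure Ω)
    (a : ℕ → Ω → ℝ) (k N : ℕ) : ℝ :=
  ((μ[|{ω | 0 < a N ω}]) {ω | signChanges a N ω = k}).toReal

/-- `v k N`: the conditional probability, given `a N < 0`, that `(a 0, …, a N)`
has exactly `k` sign changes. -/
noncomputable def condProbNeg {Ω : Type*} [MeasurableSpace Ω] (μ : Measure Ω)
    (a : ℕ → Ω → ℝ) (k N : ℕ) : ℝ :=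
  ((μ[|{ω | a N ω < 0}]) {ω | signChanges a N ω = k}).toReal

lemma signChanges_succ {Ω : Type*} (a : ℕ → Ω → ℝ) (N : ℕ) (ω : Ω) :
    signChanges a (N + 1) ω =
      signChanges a N ω + (if a N ω * a (N + 1) ω < 0 then 1 else 0) := by
  classical
  unfold signChanges
  rw [Finset.range_add_one, Finset.filter_insert]
  split
  · rw [Finset.card_insert_of_notMem (by simp)]
  · simp

lemma measurable_signChanges {Ω : Type*} [MeasurableSpace Ω] (a : ℕ → Ω → ℝ)
    (hmeas : ∀ i, Measurable (a i)) (N : ℕ) : Measurable (signChanges a N) := by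
  induction N with
  | zero =>
      have : signChanges a 0 = fun _ => 0 := by
        funext ω; simp [signChanges]
      rw [this]
      exact measurable_const
  | succ N ih =>
      have : signChanges a (N + 1) = fun ω =>
          signChanges a N ω + (if a N ω * a (N + 1) ω < 0 then 1 else 0) := by
        funext ω; exact signChanges_succ a N ω
      rw [this]
      exact ih.add <| Measurable.ite (measurableSet_lt ((hmeas N).mul (hmeas (N+1))) measurable_const) measurable_const measurable_const

lemma indep_block {Ω : Type*} [MeasurableSpace Ω] (μ : Measure Ω) (n : ℕ) (a : ℕ → Ω → ℝ)
    (hmeas : ∀ i, Measurable (a i))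
    (hindep : iIndepFun
      (fun i : Fin (n + 1) => a i) μ) :
    IndepFun (fun ω (i : Fin n) => a i ω) (a n) μ := by
  classical
  set S : Finset (Fin (n + 1)) := Finset.univ.filter (fun i => (i : ℕ) < n) with hS
  set T : Finset (Fin (n + 1)) := {Fin.last n} with hT
  have hST : Disjoint S T := by
    simp only [hS, hT, Finset.disjoint_singleton_right, Finset.mem_filter, Finset.mem_univ,
      true_and, Fin.val_last]
    omega
  have h := hindep.indepFun_finset S T hST (fun i => hmeas i)
  have h2 := h.comp (φ := fun (x : S → ℝ) (i : Fin n) =>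
      x ⟨Fin.castSucc i, by simp [hS, Fin.coe_castSucc, i.isLt]⟩)
    (ψ := fun (x : T → ℝ) => x ⟨Fin.last n, by simp [hT]⟩)
    (measurable_pi_lambda _ fun i => measurable_pi_apply _)
    (_mγ' := inferInstance) (measurable_pi_apply _)
  convert h2 using 1
  all_goals rfl

lemma sc_key {Ω : Type*} [MeasurableSpace Ω] (μ : Measure Ω) (N : ℕ) (a : ℕ → Ω → ℝ)
    (hmeas : ∀ i, Measurable (a i))
    (hindep : iIndepFun
      (fun i : Fin (N + 1 + 1) => a i) μ)
    (j : ℕ) (s t : Set ℝ) (hs : MeasurableSet s) (ht : MeasurableSet t) :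
    μ (({ω | signChanges a N ω = j} ∩ (a N) ⁻¹' s) ∩ (a (N + 1)) ⁻¹' t) =
      μ ({ω | signChanges a N ω = j} ∩ (a N) ⁻¹' s) * μ ((a (N + 1)) ⁻¹' t) := by
  classical
  set b : ℕ → (Fin (N + 1) → ℝ) → ℝ := fun i x => if h : i < N + 1 then x ⟨i, h⟩ else 0 with hb
  have hbmeas : ∀ i, Measurable (b i) := by
    intro i
    by_cases h : i < N + 1
    · simpa [hb, h, (by omega : i ≤ N)] using measurable_pi_apply (⟨i, h⟩ : Fin (N + 1))
    · simp only [hb, dif_neg h]; exact measurable_const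
  set F : Ω → (Fin (N + 1) → ℝ) := fun ω (i : Fin (N + 1)) => a i ω with hF
  have hbF : ∀ i < N + 1, ∀ ω, b i (F ω) = a i ω := by
    intro i hi ω
    simp [hb, hF, hi, (by omega : i ≤ N)]
  have hsc : ∀ ω, signChanges b N (F ω) = signChanges a N ω := by
    intro ω
    unfold signChanges
    congr 1
    apply Finset.filter_congr
    intro i hi
    have hi' : i < N := Finset.mem_range.mp hi
    rw [hbF i (by omega) ω, hbF (i + 1) (by omega) ω]
  have hsetE : ({ω | signChanges a N ω = j} ∩ (a N) ⁻¹' s) =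
      F ⁻¹' ({x | signChanges b N x = j} ∩ (b N) ⁻¹' s) := by
    ext ω
    simp only [Set.mem_inter_iff, Set.mem_setOf_eq, Set.mem_preimage]
    rw [hsc ω, hbF N (by omega) ω]
  have hE : MeasurableSet ({x : Fin (N+1) → ℝ | signChanges b N x = j} ∩ (b N) ⁻¹' s) :=
    ((measurable_signChanges b hbmeas N) (measurableSet_singleton j)).inter (hbmeas N hs)
  rw [hsetE]
  exact (indep_block μ (N + 1) a hmeas hindep).measure_inter_preimage_eq_mul _ _ hE ht

/-- First-order recursions for the conditional sign-change probabilities: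
`u_{k,n} = α·u_{k,n−1} + (1−α)·v_{k−1,n−1}` and
`v_{k,n} = α·u_{k−1,n−1} + (1−α)·v_{k,n−1}`
(with the convention `u_{−1,·} = v_{−1,·} = 0`). -/
theorem condProb_signChanges_recursion
    {Ω : Type*} [MeasurableSpace Ω] (μ : Measure Ω) [IsProbabilityMeasure μ]
    (n : ℕ) (hn : 1 ≤ n) (α : ℝ) (hα : α ∈ Set.Ioo (0 : ℝ) 1) (a : ℕ → Ω → ℝ)
    (hmeas : ∀ i, Measurable (a i))
    (hindep : iIndepFun
      (fun i : Fin (n + 1) => a i) μ)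
    (hpos : ∀ i ≤ n, μ {ω | 0 < a i ω} = ENNReal.ofReal α)
    (hneg : ∀ i ≤ n, μ {ω | a i ω < 0} = ENNReal.ofReal (1 - α)) :
    ∀ k : ℕ,
      condProbPos μ a k n =
        α * condProbPos μ a k (n - 1) +
          (1 - α) * (if k = 0 then 0 else condProbNeg μ a (k - 1) (n - 1)) ∧
      condProbNeg μ a k n =
        α * (if k = 0 then 0 else condProbPos μ a (k - 1) (n - 1)) +
          (1 - α) * condProbNeg μ a k (n - 1) := by
  classical
  obtain ⟨hα0, hα1⟩ := hα
  intro k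
  obtain ⟨N, rfl⟩ : ∃ N, n = N + 1 := ⟨n - 1, by omega⟩
  simp only [Nat.add_sub_cancel]
  -- basic measurable sets
  have hUm : MeasurableSet {ω | 0 < a N ω} := measurableSet_lt measurable_const (hmeas N)
  have hVm : MeasurableSet {ω | a N ω < 0} := measurableSet_lt (hmeas N) measurable_const
  have hPm : MeasurableSet {ω | 0 < a (N+1) ω} :=
    measurableSet_lt measurable_const (hmeas (N+1))
  have hQm : MeasurableSet {ω | a (N+1) ω < 0} :=
    measurableSet_lt (hmeas (N+1)) measurable_const
  have hU : μ {ω | 0 < a N ω} = ENNReal.ofReal α := hpos N (by omega)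
  have hV : μ {ω | a N ω < 0} = ENNReal.ofReal (1 - α) := hneg N (by omega)
  have hP : μ {ω | 0 < a (N+1) ω} = ENNReal.ofReal α := hpos (N+1) (by omega)
  have hQ : μ {ω | a (N+1) ω < 0} = ENNReal.ofReal (1 - α) := hneg (N+1) (by omega)
  -- the event a N = 0 is null
  have hUV : μ ({ω | 0 < a N ω} ∪ {ω | a N ω < 0}) = 1 := by
    rw [measure_union (by
      rw [Set.disjoint_left]; intro ω h1 h2
      exact absurd h1 (by simp only [Set.mem_setOf_eq] at h2 ⊢; linarith)) hVm,
      hU, hV, ← ENNReal.ofReal_add (by linarith) (by linarith)]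
    norm_num
  have hzero : μ ({ω | 0 < a N ω} ∪ {ω | a N ω < 0})ᶜ = 0 := by
    rw [measure_compl (hUm.union hVm) (measure_ne_top _ _), hUV, measure_univ, tsub_self]
  -- splitting along the sign of a N
  have hsplit : ∀ X : Set Ω, μ X = μ (X ∩ {ω | 0 < a N ω}) + μ (X ∩ {ω | a N ω < 0}) := by
    intro X
    have h1 : μ (X ∩ {ω | 0 < a N ω}) + μ (X \ {ω | 0 < a N ω}) = μ X :=
      measure_inter_add_diff X hUm
    have h2 : μ (X \ {ω | 0 < a N ω}) = μ (X ∩ {ω | a N ω < 0}) := by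
      apply le_antisymm
      · calc μ (X \ {ω | 0 < a N ω})
            ≤ μ ((X ∩ {ω | a N ω < 0}) ∪ ({ω | 0 < a N ω} ∪ {ω | a N ω < 0})ᶜ) := by
              apply measure_mono
              rintro ω ⟨hx, hns⟩
              simp only [Set.mem_setOf_eq] at hns
              rcases lt_trichotomy (a N ω) 0 with h | h | h
              · exact Or.inl ⟨hx, h⟩
              · exact Or.inr (by simp [h])
              · exact absurd h hns
          _ ≤ μ (X ∩ {ω | a N ω < 0}) + μ (({ω | 0 < a N ω} ∪ {ω | a N ω < 0})ᶜ) :=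
              measure_union_le _ _
          _ = μ (X ∩ {ω | a N ω < 0}) := by rw [hzero, add_zero]
      · apply measure_mono
        rintro ω ⟨hx, hneg'⟩
        simp only [Set.mem_setOf_eq] at hneg'
        exact ⟨hx, by simp only [Set.mem_setOf_eq]; linarith⟩
    rw [← h1, h2]
  -- independence products
  have keyU : ∀ j (t : Set ℝ), MeasurableSet t →
      μ (({ω | signChanges a N ω = j} ∩ {ω | 0 < a N ω}) ∩ (a (N+1)) ⁻¹' t) =
        μ ({ω | signChanges a N ω = j} ∩ {ω | 0 < a N ω}) * μ ((a (N+1)) ⁻¹' t) :=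
    fun j t ht => sc_key μ N a hmeas hindep j (Set.Ioi 0) t measurableSet_Ioi ht
  have keyV : ∀ j (t : Set ℝ), MeasurableSet t →
      μ (({ω | signChanges a N ω = j} ∩ {ω | a N ω < 0}) ∩ (a (N+1)) ⁻¹' t) =
        μ ({ω | signChanges a N ω = j} ∩ {ω | a N ω < 0}) * μ ((a (N+1)) ⁻¹' t) :=
    fun j t ht => sc_key μ N a hmeas hindep j (Set.Iio 0) t measurableSet_Iio ht
  -- set identities
  have hPEU : ({ω | 0 < a (N+1) ω} ∩ {ω | signChanges a (N+1) ω = k}) ∩ {ω | 0 < a N ω}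
      = ({ω | signChanges a N ω = k} ∩ {ω | 0 < a N ω}) ∩ (a (N+1)) ⁻¹' (Set.Ioi 0) := by
    ext ω
    simp only [Set.mem_inter_iff, Set.mem_setOf_eq, Set.mem_preimage, Set.mem_Ioi]
    constructor
    · rintro ⟨⟨h1, h2⟩, h3⟩
      rw [signChanges_succ, if_neg (not_lt.mpr (mul_pos h3 h1).le)] at h2
      exact ⟨⟨by omega, h3⟩, h1⟩
    · rintro ⟨⟨h2, h3⟩, h1⟩
      refine ⟨⟨h1, ?_⟩, h3⟩
      rw [signChanges_succ, if_neg (not_lt.mpr (mul_pos h3 h1).le)]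
      omega
  have hPEV : ({ω | 0 < a (N+1) ω} ∩ {ω | signChanges a (N+1) ω = k}) ∩ {ω | a N ω < 0}
      = if k = 0 then ∅ else
        ({ω | signChanges a N ω = k - 1} ∩ {ω | a N ω < 0}) ∩ (a (N+1)) ⁻¹' (Set.Ioi 0) := by
    split_ifs with hk
    · subst hk
      apply Set.eq_empty_iff_forall_notMem.mpr
      rintro ω ⟨⟨h1, h2⟩, h3⟩
      simp only [Set.mem_setOf_eq] at h1 h2 h3
      rw [signChanges_succ, if_pos (mul_neg_of_neg_of_pos h3 h1)] at h2
      omega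
    · ext ω
      simp only [Set.mem_inter_iff, Set.mem_setOf_eq, Set.mem_preimage, Set.mem_Ioi]
      constructor
      · rintro ⟨⟨h1, h2⟩, h3⟩
        rw [signChanges_succ, if_pos (mul_neg_of_neg_of_pos h3 h1)] at h2
        exact ⟨⟨by omega, h3⟩, h1⟩
      · rintro ⟨⟨h2, h3⟩, h1⟩
        refine ⟨⟨h1, ?_⟩, h3⟩
        rw [signChanges_succ, if_pos (mul_neg_of_neg_of_pos h3 h1)]
        omega
  have hQEU : ({ω | a (N+1) ω < 0} ∩ {ω | signChanges a (N+1) ω = k}) ∩ {ω | 0 < a N ω}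
      = if k = 0 then ∅ else
        ({ω | signChanges a N ω = k - 1} ∩ {ω | 0 < a N ω}) ∩ (a (N+1)) ⁻¹' (Set.Iio 0) := by
    split_ifs with hk
    · subst hk
      apply Set.eq_empty_iff_forall_notMem.mpr
      rintro ω ⟨⟨h1, h2⟩, h3⟩
      simp only [Set.mem_setOf_eq] at h1 h2 h3
      rw [signChanges_succ, if_pos (mul_neg_of_pos_of_neg h3 h1)] at h2
      omega
    · ext ω
      simp only [Set.mem_inter_iff, Set.mem_setOf_eq, Set.mem_preimage, Set.mem_Iio]
      constructor
      · rintro ⟨⟨h1, h2⟩, h3⟩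
        rw [signChanges_succ, if_pos (mul_neg_of_pos_of_neg h3 h1)] at h2
        exact ⟨⟨by omega, h3⟩, h1⟩
      · rintro ⟨⟨h2, h3⟩, h1⟩
        refine ⟨⟨h1, ?_⟩, h3⟩
        rw [signChanges_succ, if_pos (mul_neg_of_pos_of_neg h3 h1)]
        omega
  have hQEV : ({ω | a (N+1) ω < 0} ∩ {ω | signChanges a (N+1) ω = k}) ∩ {ω | a N ω < 0}
      = ({ω | signChanges a N ω = k} ∩ {ω | a N ω < 0}) ∩ (a (N+1)) ⁻¹' (Set.Iio 0) := by
    ext ω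
    simp only [Set.mem_inter_iff, Set.mem_setOf_eq, Set.mem_preimage, Set.mem_Iio]
    constructor
    · rintro ⟨⟨h1, h2⟩, h3⟩
      rw [signChanges_succ, if_neg (not_lt.mpr (mul_pos_of_neg_of_neg h3 h1).le)] at h2
      exact ⟨⟨by omega, h3⟩, h1⟩
    · rintro ⟨⟨h2, h3⟩, h1⟩
      refine ⟨⟨h1, ?_⟩, h3⟩
      rw [signChanges_succ, if_neg (not_lt.mpr (mul_pos_of_neg_of_neg h3 h1).le)]
      omega
  have hP' : μ ((a (N+1)) ⁻¹' (Set.Ioi 0)) = ENNReal.ofReal α := hP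
  have hQ' : μ ((a (N+1)) ⁻¹' (Set.Iio 0)) = ENNReal.ofReal (1 - α) := hQ
  -- measures of the intersections with the conditioning events
  have hmuP : μ ({ω | 0 < a (N+1) ω} ∩ {ω | signChanges a (N+1) ω = k})
      = (μ ({ω | signChanges a N ω = k} ∩ {ω | 0 < a N ω}) +
          (if k = 0 then 0 else μ ({ω | signChanges a N ω = k - 1} ∩ {ω | a N ω < 0}))) *
        ENNReal.ofReal α := by
    rw [hsplit _, hPEU, hPEV, keyU k _ measurableSet_Ioi, hP']
    split_ifs with hk
    · simp
    · rw [keyV (k-1) _ measurableSet_Ioi, hP', add_mul]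
  have hmuQ : μ ({ω | a (N+1) ω < 0} ∩ {ω | signChanges a (N+1) ω = k})
      = ((if k = 0 then 0 else μ ({ω | signChanges a N ω = k - 1} ∩ {ω | 0 < a N ω})) +
          μ ({ω | signChanges a N ω = k} ∩ {ω | a N ω < 0})) *
        ENNReal.ofReal (1 - α) := by
    rw [hsplit _, hQEU, hQEV, keyV k _ measurableSet_Iio, hQ']
    split_ifs with hk
    · simp
    · rw [keyU (k-1) _ measurableSet_Iio, hQ', add_mul]
  -- unfold the conditional probabilities
  have hcpP : ∀ j, condProbPos μ a j N =
      ((ENNReal.ofReal α)⁻¹ * μ ({ω | signChanges a N ω = j} ∩ {ω | 0 < a N ω})).toReal := by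
    intro j
    unfold condProbPos
    rw [cond_apply hUm, hU, Set.inter_comm]
  have hcpN : ∀ j, condProbNeg μ a j N =
      ((ENNReal.ofReal (1 - α))⁻¹ * μ ({ω | signChanges a N ω = j} ∩ {ω | a N ω < 0})).toReal := by
    intro j
    unfold condProbNeg
    rw [cond_apply hVm, hV, Set.inter_comm]
  have hcpP1 : condProbPos μ a k (N+1) =
      ((ENNReal.ofReal α)⁻¹ *
        μ ({ω | 0 < a (N+1) ω} ∩ {ω | signChanges a (N+1) ω = k})).toReal := by
    unfold condProbPos
    rw [cond_apply hPm, hP]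
  have hcpN1 : condProbNeg μ a k (N+1) =
      ((ENNReal.ofReal (1 - α))⁻¹ *
        μ ({ω | a (N+1) ω < 0} ∩ {ω | signChanges a (N+1) ω = k})).toReal := by
    unfold condProbNeg
    rw [cond_apply hQm, hQ]
  -- final real arithmetic
  have hαne : α ≠ 0 := ne_of_gt hα0
  have hβne : (1 : ℝ) - α ≠ 0 := by linarith
  by_cases hk : k = 0
  · subst hk
    simp only [if_pos] at hmuP hmuQ ⊢
    constructor
    · rw [hcpP1, hmuP, hcpP 0, add_zero, mul_zero, add_zero]
      rw [ENNReal.toReal_mul, ENNReal.toReal_mul, ENNReal.toReal_mul, ENNReal.toReal_inv,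
        ENNReal.toReal_ofReal hα0.le]
      field_simp
    · rw [hcpN1, hmuQ, hcpN 0, zero_add, mul_zero, zero_add]
      rw [ENNReal.toReal_mul, ENNReal.toReal_mul, ENNReal.toReal_mul, ENNReal.toReal_inv,
        ENNReal.toReal_ofReal (by linarith : (0:ℝ) ≤ 1 - α)]
      field_simp
  · simp only [hk, if_neg, if_false] at hmuP hmuQ ⊢
    constructor
    · rw [hcpP1, hmuP, hcpP k, hcpN (k-1)]
      rw [ENNReal.toReal_mul, ENNReal.toReal_mul,
        ENNReal.toReal_add (measure_ne_top _ _) (measure_ne_top _ _),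
        ENNReal.toReal_mul, ENNReal.toReal_mul, ENNReal.toReal_inv, ENNReal.toReal_inv,
        ENNReal.toReal_ofReal hα0.le,
        ENNReal.toReal_ofReal (by linarith : (0:ℝ) ≤ 1 - α)]
      field_simp
    · rw [hcpN1, hmuQ, hcpN k, hcpP (k-1)]
      rw [ENNReal.toReal_mul, ENNReal.toReal_mul,
        ENNReal.toReal_add (measure_ne_top _ _) (measure_ne_top _ _),
        ENNReal.toReal_mul, ENNReal.toReal_mul, ENNReal.toReal_inv, ENNReal.toReal_inv,
        ENNReal.toReal_ofReal hα0.le,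
        ENNReal.toReal_ofReal (by linarith : (0:ℝ) ≤ 1 - α)]
      field_simp
end
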